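/- Every total function Σ* → Γ* computed by a monotone register transducer can be computed by a planar reversible deterministic two-way finite transducer. -/

import Mathlib

namespace Planar2DFT

/-- Tape alphabet: input letters plus the two endmarkers `▷` and `◁`. -/
inductive Tape (A : Type) where
  | lend : Tape A
  | rend : Tape A
  | sym  : A → Tape A

/-- Edges of the transition profile `G(ρ, f)` on vertices `Q × Bool`
(`true` codes direction `+1`, `false` codes `-1`): an edge
`(q, -ρ q) → (r, ρ r)` for every `(q, r) ∈ f`. -/
def ProfileEdge {Q : Type} (ρ : Q → Bool) (f : Set (Q × Q)) :
    Q × Bool → Q × Bool → Prop :=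
  fun u v => ∃ p ∈ f, u = (p.1, !ρ p.1) ∧ v = (p.2, ρ p.2)

/-- The extension of a strict order on `Q` to `Q × Bool`:
`(q,i) < (r,j)` iff (`i = -1` and `j = 1`), or (`q < r` and `i = j = 1`),
or (`q > r` and `i = j = -1`). -/
def ExtLt {Q : Type} (lt : Q → Q → Prop) : Q × Bool → Q × Bool → Prop :=
  fun x y =>
    (x.2 = false ∧ y.2 = true) ∨
    (lt x.1 y.1 ∧ x.2 = true ∧ y.2 = true) ∨
    (lt y.1 x.1 ∧ x.2 = false ∧ y.2 = false)

/-- Planarity of a transition w.r.t. a direction map `ρ` and a strict total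
order `lt`: no vertices `u < r < v < s` with an edge between `u` and `v`
(in either direction) and an edge between `r` and `s` (in either direction). -/
def IsPlanar {Q : Type} (ρ : Q → Bool) (lt : Q → Q → Prop) (f : Set (Q × Q)) : Prop :=
  ¬ ∃ u r v s : Q × Bool, ExtLt lt u r ∧ ExtLt lt r v ∧ ExtLt lt v s ∧
      (ProfileEdge ρ f u v ∨ ProfileEdge ρ f v u) ∧
      (ProfileEdge ρ f r s ∨ ProfileEdge ρ f s r)

/-- Deterministic transition: a partial function. -/
def IsDet {Q : Type} (f : Set (Q × Q)) : Prop :=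
  ∀ q r r', (q, r) ∈ f → (q, r') ∈ f → r = r'

/-- Reversible transition: a partial injection. -/
def IsRev {Q : Type} (f : Set (Q × Q)) : Prop :=
  IsDet f ∧ ∀ q q' r, (q, r) ∈ f → (q', r) ∈ f → q = q'

/-- Edges of the glued graph `C(ρ, f, g)` on `Q × Fin 3`, levels `0, 1, 2`
coding `-1, 0, 1`: the copy of `G(ρ,f)` lives on levels `{0,1}` (side `+1`
corresponding to level `1`) and the copy of `G(ρ,g)` on levels `{1,2}`
(side `+1` corresponding to level `2`). -/
def GlueEdge {Q : Type} (ρ : Q → Bool) (f g : Set (Q × Q)) :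
    Q × Fin 3 → Q × Fin 3 → Prop :=
  fun x y =>
    (x.2 ≠ 2 ∧ y.2 ≠ 2 ∧
      ProfileEdge ρ f (x.1, decide (x.2 = 1)) (y.1, decide (y.2 = 1))) ∨
    (x.2 ≠ 0 ∧ y.2 ≠ 0 ∧
      ProfileEdge ρ g (x.1, decide (x.2 = 2)) (y.1, decide (y.2 = 2)))

/-- Gluing composition `f * g` of transitions: `(q, r) ∈ f * g` iff there is a
directed path from `(q, -ρ q)` to `(r, ρ r)` in the glued graph `C(ρ, f, g)`. -/
def glue {Q : Type} (ρ : Q → Bool) (f g : Set (Q × Q)) : Set (Q × Q) :=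
  {p | Relation.ReflTransGen (GlueEdge ρ f g)
        (p.1, if ρ p.1 then (0 : Fin 3) else 2)
        (p.2, if ρ p.2 then (2 : Fin 3) else 0)}

/-- The identity transition, unit of the gluing composition. -/
def idRel (Q : Type) : Set (Q × Q) := {p | p.1 = p.2}

/-- Iterated gluing powers of a transition, with `glpow ρ f 0 = idRel Q`. -/
def glpow {Q : Type} (ρ : Q → Bool) (f : Set (Q × Q)) : ℕ → Set (Q × Q)
  | 0 => idRel Q
  | n + 1 => glue ρ (glpow ρ f n) f

/-- A configuration of a two-way machine: the tape content to the left of the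
head, the current state, and the tape content to the right of the head. -/
abbrev Config (Q A : Type) := List (Tape A) × Q × List (Tape A)

/-- The tape encoding `▷ u ◁` of an input word `u`. -/
def tapeOf {A : Type} (u : List A) : List (Tape A) :=
  Tape.lend :: (u.map Tape.sym ++ [Tape.rend])

/-- A two-way (nondeterministic) finite transducer. -/
structure TwoWayTransducer (Q A B : Type) where
  ρ : Q → Bool
  init : Q
  init_fwd : ρ init = true
  final : Set Q
  δ : Tape A → Set (Q × List B × Q)

namespace TwoWayTransducer

variable {Q A B : Type}

/-- The transitions `⌊δ⌋(a)` of the underlying automaton. -/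
def rel (T : TwoWayTransducer Q A B) (a : Tape A) : Set (Q × Q) :=
  {p | ∃ w, (p.1, w, p.2) ∈ T.δ a}

def Deterministic (T : TwoWayTransducer Q A B) : Prop :=
  ∀ a, IsDet (T.rel a)

def Reversible (T : TwoWayTransducer Q A B) : Prop :=
  ∀ a, IsRev (T.rel a)

def Planar (T : TwoWayTransducer Q A B) : Prop :=
  ∃ lt : Q → Q → Prop, IsStrictTotalOrder Q lt ∧
    ∀ a : A, IsPlanar T.ρ lt (T.rel (Tape.sym a))

/-- One step of the two-way transducer, labelled by the output word. -/
def Step (T : TwoWayTransducer Q A B) (c : Config Q A) (w : List B)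
    (c' : Config Q A) : Prop :=
  ∃ a u v q r, (q, w, r) ∈ T.δ a ∧
    ((T.ρ q = true ∧ T.ρ r = true ∧ c = (u, q, a :: v) ∧ c' = (u ++ [a], r, v)) ∨
     (T.ρ q = true ∧ T.ρ r = false ∧ c = (u, q, a :: v) ∧ c' = (u, r, a :: v)) ∨
     (T.ρ q = false ∧ T.ρ r = false ∧ c = (u ++ [a], q, v) ∧ c' = (u, r, a :: v)) ∨
     (T.ρ q = false ∧ T.ρ r = true ∧ c = (u ++ [a], q, v) ∧ c' = (u ++ [a], r, v)))

/-- Multi-step runs, accumulating the concatenated output. -/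
inductive Run (T : TwoWayTransducer Q A B) : Config Q A → List B → Config Q A → Prop
  | refl (c : Config Q A) : Run T c [] c
  | step {c₁ w₁ c₂ w₂ c₃} : Run T c₁ w₁ c₂ → T.Step c₂ w₂ c₃ → Run T c₁ (w₁ ++ w₂) c₃

/-- The pair `(u, v)` is realized by `T`. -/
def Realizes (T : TwoWayTransducer Q A B) (u : List A) (v : List B) : Prop :=
  ∃ qf ∈ T.final, T.Run ([], T.init, tapeOf u) v (tapeOf u, qf, [])

/-- `T` computes the partial function `f`. -/
def Computes (T : TwoWayTransducer Q A B) (f : List A → Option (List B)) : Prop :=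
  ∀ u v, f u = some v ↔ T.Realizes u v

end TwoWayTransducer

/-- Membership in the least submonoid of `B(Q,ρ)` containing the transitions
`⌊δ⌋(a)` for the input letters `a`. -/
inductive InBehav {Q A B : Type} (T : TwoWayTransducer Q A B) : Set (Q × Q) → Prop
  | one : InBehav T (idRel Q)
  | gen (a : A) : InBehav T (T.rel (Tape.sym a))
  | mul {f g} : InBehav T f → InBehav T g → InBehav T (glue T.ρ f g)

/-- The behaviour monoid `B(T)` is aperiodic. -/
def ApBehav {Q A B : Type} (T : TwoWayTransducer Q A B) : Prop :=
  ∃ n : ℕ, ∀ f, InBehav T f → glpow T.ρ f (n + 1) = glpow T.ρ f n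

/-- A first-order transduction: a partial function computed by some
deterministic two-way transducer whose behaviour monoid is aperiodic. -/
def IsFOTransduction {A B : Type} (f : List A → Option (List B)) : Prop :=
  ∃ (n : ℕ) (T : TwoWayTransducer (Fin n) A B),
    T.Deterministic ∧ ApBehav T ∧ T.Computes f

/-- A two-way (nondeterministic) finite automaton. -/
structure TwoWayAutomaton (Q A : Type) where
  ρ : Q → Bool
  init : Q
  init_fwd : ρ init = true
  final : Set Q
  δ : Tape A → Set (Q × Q)

namespace TwoWayAutomaton

variable {Q A : Type}

def Deterministic (M : TwoWayAutomaton Q A) : Prop := ∀ a, IsDet (M.δ a)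

def Reversible (M : TwoWayAutomaton Q A) : Prop := ∀ a, IsRev (M.δ a)

def Planar (M : TwoWayAutomaton Q A) : Prop :=
  ∃ lt : Q → Q → Prop, IsStrictTotalOrder Q lt ∧
    ∀ a : A, IsPlanar M.ρ lt (M.δ (Tape.sym a))

/-- One step of the two-way automaton. -/
def Step (M : TwoWayAutomaton Q A) (c c' : Config Q A) : Prop :=
  ∃ a u v q r, (q, r) ∈ M.δ a ∧
    ((M.ρ q = true ∧ M.ρ r = true ∧ c = (u, q, a :: v) ∧ c' = (u ++ [a], r, v)) ∨
     (M.ρ q = true ∧ M.ρ r = false ∧ c = (u, q, a :: v) ∧ c' = (u, r, a :: v)) ∨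
     (M.ρ q = false ∧ M.ρ r = false ∧ c = (u ++ [a], q, v) ∧ c' = (u, r, a :: v)) ∨
     (M.ρ q = false ∧ M.ρ r = true ∧ c = (u ++ [a], q, v) ∧ c' = (u ++ [a], r, v)))

def Accepts (M : TwoWayAutomaton Q A) (u : List A) : Prop :=
  ∃ qf ∈ M.final, Relation.ReflTransGen M.Step
    ([], M.init, tapeOf u) (tapeOf u, qf, [])

def Language (M : TwoWayAutomaton Q A) : Set (List A) := {u | M.Accepts u}

end TwoWayAutomaton

/-- The underlying automaton `⌊T⌋` of a transducer `T`. -/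
def forget {Q A B : Type} (T : TwoWayTransducer Q A B) : TwoWayAutomaton Q A :=
  { ρ := T.ρ, init := T.init, init_fwd := T.init_fwd, final := T.final,
    δ := fun a => T.rel a }

/-- Star-free languages: the smallest class containing all finite languages
and closed under finite union, complement and concatenation. -/
inductive StarFree {A : Type} : Set (List A) → Prop
  | of_finite (L : Set (List A)) : L.Finite → StarFree L
  | union {L M : Set (List A)} : StarFree L → StarFree M → StarFree (L ∪ M)
  | compl {L : Set (List A)} : StarFree L → StarFree Lᶜ
  | concat {L M : Set (List A)} : StarFree L → StarFree M →
      StarFree {w | ∃ u ∈ L, ∃ v ∈ M, w = u ++ v}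

/-- A (total, deterministic) sequential transducer. -/
structure SeqTransducer (Q A B : Type) where
  init : Q
  next : A → Q → Q
  out : A → Q → List B
  fin : Q → List B

namespace SeqTransducer

variable {Q A B : Type}

/-- Running a sequential transducer on a word from a state: final state and
produced output. -/
def run (T : SeqTransducer Q A B) : List A → Q → Q × List B
  | [], q => (q, [])
  | a :: w, q =>
      let p := run T w (T.next a q)
      (p.1, T.out a q ++ p.2)

/-- The (total) sequential function computed by a sequential transducer. -/
def fn (T : SeqTransducer Q A B) (w : List A) : List B :=
  (T.run w T.init).2 ++ T.fin (T.run w T.init).1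

end SeqTransducer

/-- Membership in the transition monoid of a sequential transducer, i.e. the
monoid of functions `Q → Q` generated by the `∂₁(a)`. -/
inductive SeqGen {Q A B : Type} (T : SeqTransducer Q A B) : (Q → Q) → Prop
  | id : SeqGen T id
  | gen (a : A) : SeqGen T (T.next a)
  | comp {h h'} : SeqGen T h → SeqGen T h' → SeqGen T (h ∘ h')

/-- A sequential transducer is aperiodic when its transition monoid is. -/
def SeqTransducer.Aperiodic {Q A B : Type} (T : SeqTransducer Q A B) : Prop :=
  ∃ n : ℕ, ∀ h, SeqGen T h → h^[n + 1] = h^[n]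


/-- The map `σ†` induced by a register update `σ` on register valuations. -/
def applyUpdate {m : ℕ} {B : Type} (σ : Fin m → List (Fin m ⊕ B))
    (v : Fin m → List B) : Fin m → List B :=
  fun r => ((σ r).map (Sum.elim v (fun b => [b]))).flatten

/-- The list of register occurrences in `σ(r₁)σ(r₂)⋯σ(r_n)`. -/
def regOccs {m : ℕ} {B : Type} (σ : Fin m → List (Fin m ⊕ B)) : List (Fin m) :=
  (((List.finRange m).map σ).flatten).filterMap Sum.getLeft?

/-- A register update is copyless monotone when its list of register
occurrences is strictly increasing. -/
def CopylessMonotone {m : ℕ} {B : Type} (σ : Fin m → List (Fin m ⊕ B)) : Prop :=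
  List.Pairwise (· < ·) (regOccs σ)

/-- A monotone register transducer with registers `Fin (m+1)` (ordered as
usual, with minimum register `0`), input alphabet `A`, output alphabet `B`. -/
structure MonotoneRegTransducer (m : ℕ) (A B : Type) where
  upd : A → Fin (m + 1) → List (Fin (m + 1) ⊕ B)
  mono : ∀ a, CopylessMonotone (upd a)

/-- The total function computed by a monotone register transducer: apply the
updates left to right starting from the all-empty valuation and output the
content of the minimum register. -/
def MonotoneRegTransducer.fn {m : ℕ} {A B : Type}
    (T : MonotoneRegTransducer m A B) (w : List A) : List B :=
  (w.foldl (fun v a => applyUpdate (T.upd a) v) (fun _ => ([] : List B))) 0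



section Construction

variable {m : ℕ} {A B : Type}

/-- States of the constructed two-way transducer. -/
inductive St (m : ℕ) where
  | S : St m
  | F : St m
  | D : Fin (m + 1) → St m
  | U : Fin (m + 1) → St m
deriving DecidableEq, Fintype

/-- Direction map: `D`-states move left, everything else moves right. -/
def rho {m : ℕ} : St m → Bool
  | .D _ => false
  | _ => true

/-- Split a register-update word into its maximal letter prefix and (if any)
the first register occurrence with the remaining tail. -/
def parse : List (Fin (m + 1) ⊕ B) → List B × Option (Fin (m + 1) × List (Fin (m + 1) ⊕ B))
  | [] => ([], none)
  | .inl c :: t => ([], some (c, t))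
  | .inr b :: t => (b :: (parse t).1, (parse t).2)

lemma parse_none : ∀ {l : List (Fin (m + 1) ⊕ B)} {w : List B},
    parse l = (w, none) → l = w.map Sum.inr
  | [], w, h => by simp [parse] at h; simp [h.symm]
  | .inl c :: t, w, h => by simp [parse] at h
  | .inr b :: t, w, h => by
      rcases hp : parse t with ⟨w', o⟩
      rw [parse, hp] at h
      obtain ⟨h1, h2⟩ : b :: w' = w ∧ o = none := by simpa using h
      subst h2
      have ht := parse_none hp
      simp [← h1, ht]

lemma parse_some : ∀ {l : List (Fin (m + 1) ⊕ B)} {w : List B} {c t},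
    parse l = (w, some (c, t)) → l = w.map Sum.inr ++ .inl c :: t
  | [], w, c, t, h => by simp [parse] at h
  | .inl c' :: t', w, c, t, h => by
      simp only [parse, Prod.mk.injEq, Option.some.injEq] at h
      obtain ⟨h1, h2, h3⟩ := h
      simp [← h1, ← h2, ← h3]
  | .inr b :: t', w, c, t, h => by
      rcases hp : parse t' with ⟨w', o⟩
      rw [parse, hp] at h
      obtain ⟨h1, h2⟩ : b :: w' = w ∧ o = some (c, t) := by simpa using h
      subst h2
      have ht := parse_some hp
      simp [← h1, ht]

/-- The tail after the first occurrence of register `c`. -/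
def afterOcc (c : Fin (m + 1)) : List (Fin (m + 1) ⊕ B) → Option (List (Fin (m + 1) ⊕ B))
  | [] => none
  | .inl c' :: t => if c' = c then some t else afterOcc c t
  | .inr _ :: t => afterOcc c t

lemma afterOcc_none {c : Fin (m + 1)} :
    ∀ {l : List (Fin (m + 1) ⊕ B)}, Sum.inl c ∉ l → afterOcc c l = none
  | [], _ => rfl
  | .inl c' :: t, h => by
      have hne : c' ≠ c := fun e => h (by simp [e])
      simp [afterOcc, hne, afterOcc_none (fun hc => h (List.mem_cons_of_mem _ hc))]
  | .inr b :: t, h => by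
      simp [afterOcc, afterOcc_none (fun hc => h (List.mem_cons_of_mem _ hc))]

lemma afterOcc_eq {c : Fin (m + 1)} :
    ∀ {s : List (Fin (m + 1) ⊕ B)} {t}, Sum.inl c ∉ s →
      afterOcc c (s ++ .inl c :: t) = some t
  | [], t, _ => by simp [afterOcc]
  | .inl c' :: s', t, h => by
      have hne : c' ≠ c := fun e => h (by simp [e])
      simp [afterOcc, hne, afterOcc_eq (fun hc => h (List.mem_cons_of_mem _ hc))]
  | .inr b :: s', t, h => by
      simp [afterOcc, afterOcc_eq (fun hc => h (List.mem_cons_of_mem _ hc))]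

lemma afterOcc_sound {c : Fin (m + 1)} :
    ∀ {l t : List (Fin (m + 1) ⊕ B)}, afterOcc c l = some t → ∃ s, l = s ++ .inl c :: t
  | [], t, h => by simp [afterOcc] at h
  | .inl c' :: l', t, h => by
      by_cases e : c' = c
      · subst e; simp [afterOcc] at h; exact ⟨[], by simp [h]⟩
      · simp [afterOcc, e] at h
        obtain ⟨s, hs⟩ := afterOcc_sound h
        exact ⟨.inl c' :: s, by simp [hs]⟩
  | .inr b :: l', t, h => by
      simp only [afterOcc] at h
      obtain ⟨s, hs⟩ := afterOcc_sound h
      exact ⟨.inr b :: s, by simp [hs]⟩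

/-- Find the (unique) block containing an occurrence of `c`, returning the
block name together with the tail after the occurrence. -/
def findBlock (σ : Fin (m + 1) → List (Fin (m + 1) ⊕ B)) (c : Fin (m + 1)) :
    List (Fin (m + 1)) → Option (Fin (m + 1) × List (Fin (m + 1) ⊕ B))
  | [] => none
  | r :: rs =>
      match afterOcc c (σ r) with
      | some t => some (r, t)
      | none => findBlock σ c rs

lemma findBlock_sound {σ : Fin (m + 1) → List (Fin (m + 1) ⊕ B)} {c r t} :
    ∀ {L : List (Fin (m + 1))}, findBlock σ c L = some (r, t) → ∃ s, σ r = s ++ .inl c :: t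
  | [], h => by simp [findBlock] at h
  | r₀ :: L', h => by
      rcases ha : afterOcc c (σ r₀) with _ | t₀
      · rw [findBlock, ha] at h
        exact findBlock_sound h
      · rw [findBlock, ha] at h
        obtain ⟨h1, h2⟩ : r₀ = r ∧ t₀ = t := by
          simpa using h
        subst h1; subst h2
        exact afterOcc_sound ha

lemma findBlock_eq {σ : Fin (m + 1) → List (Fin (m + 1) ⊕ B)} {c r t} :
    ∀ {L : List (Fin (m + 1))}, r ∈ L → (∀ r' ∈ L, Sum.inl c ∈ σ r' → r' = r) →
      afterOcc c (σ r) = some t → findBlock σ c L = some (r, t)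
  | [], hL, _, _ => by simp at hL
  | r₀ :: L', hL, hu, ha => by
      by_cases e : r₀ = r
      · subst e; rw [findBlock, ha]
      · have hnone : afterOcc c (σ r₀) = none := by
          rcases hb : afterOcc c (σ r₀) with _ | t₀
          · rfl
          · obtain ⟨s, hs⟩ := afterOcc_sound hb
            exact absurd (hu r₀ List.mem_cons_self (by simp [hs])) e
        rw [findBlock, hnone]
        have hL' : r ∈ L' := by
          rcases List.mem_cons.mp hL with h | h
          · exact absurd h.symm e
          · exact h
        exact findBlock_eq hL' (fun r' h' => hu r' (List.mem_cons_of_mem _ h')) ha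



/-- Register occurrences of a single block. -/
def occs (σ : Fin (m + 1) → List (Fin (m + 1) ⊕ B)) (r : Fin (m + 1)) : List (Fin (m + 1)) :=
  (σ r).filterMap Sum.getLeft?

lemma mem_filterMap_getLeft {l : List (Fin (m + 1) ⊕ B)} {c : Fin (m + 1)} :
    c ∈ l.filterMap Sum.getLeft? ↔ Sum.inl c ∈ l := by
  simp [List.mem_filterMap]

lemma mem_occs {σ : Fin (m + 1) → List (Fin (m + 1) ⊕ B)} {r c} :
    c ∈ occs σ r ↔ Sum.inl c ∈ σ r := mem_filterMap_getLeft

lemma regOccs_eq (σ : Fin (m + 1) → List (Fin (m + 1) ⊕ B)) :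
    regOccs σ = ((List.finRange (m + 1)).map (occs σ)).flatten := by
  simp only [regOccs, List.filterMap_flatten, List.map_map]
  rfl

section Mono
variable {σ : Fin (m + 1) → List (Fin (m + 1) ⊕ B)} (hm : CopylessMonotone σ)

include hm

lemma sorted_occs (r : Fin (m + 1)) : (occs σ r).Pairwise (· < ·) := by
  have h := hm
  rw [CopylessMonotone, regOccs_eq, List.pairwise_flatten] at h
  exact h.1 _ (List.mem_map_of_mem (List.mem_finRange r))

lemma cross_mem {r r' c c' : Fin (m + 1)} (hrr : (r : ℕ) < (r' : ℕ))
    (hc : Sum.inl c ∈ σ r) (hc' : Sum.inl c' ∈ σ r') : (c : ℕ) < (c' : ℕ) := by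
  have h := hm
  rw [CopylessMonotone, regOccs_eq, List.pairwise_flatten] at h
  have h2 := h.2
  rw [List.pairwise_map] at h2
  rw [List.pairwise_iff_getElem] at h2
  have hlen : ∀ i : Fin (m + 1), (i : ℕ) < (List.finRange (m + 1)).length := by
    simp [List.length_finRange, Fin.is_lt]
    exact fun i => Fin.is_le i
  have := h2 (r : ℕ) (r' : ℕ) (hlen r) (hlen r') hrr
  simp only [List.getElem_finRange, Fin.cast_mk, Fin.eta] at this
  have hc2 : c ∈ occs σ r := mem_occs.mpr hc
  have hc2' : c' ∈ occs σ r' := mem_occs.mpr hc'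
  exact this c hc2 c' hc2'

lemma block_unique {r r' c : Fin (m + 1)} (hc : Sum.inl c ∈ σ r) (hc' : Sum.inl c ∈ σ r') :
    r = r' := by
  rcases Nat.lt_trichotomy (r : ℕ) (r' : ℕ) with h | h | h
  · exact absurd (cross_mem hm h hc hc') (lt_irrefl _)
  · exact Fin.ext h
  · exact absurd (cross_mem hm h hc' hc) (lt_irrefl _)

lemma block_before {r : Fin (m + 1)} {s t : List (Fin (m + 1) ⊕ B)} {c x : Fin (m + 1)}
    (h : σ r = s ++ .inl c :: t) (hx : Sum.inl x ∈ s) : (x : ℕ) < (c : ℕ) := by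
  have hs := sorted_occs hm r
  rw [occs, h, List.filterMap_append, List.pairwise_append] at hs
  exact hs.2.2 x (mem_filterMap_getLeft.mpr hx) c (by simp)

lemma block_after {r : Fin (m + 1)} {s t : List (Fin (m + 1) ⊕ B)} {c x : Fin (m + 1)}
    (h : σ r = s ++ .inl c :: t) (hx : Sum.inl x ∈ t) : (c : ℕ) < (x : ℕ) := by
  have hs := sorted_occs hm r
  rw [occs, h, List.filterMap_append, List.pairwise_append] at hs
  have := hs.2.1
  rw [show (Sum.inl c :: t : List (Fin (m+1) ⊕ B)).filterMap Sum.getLeft? =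
      c :: t.filterMap Sum.getLeft? by simp, List.pairwise_cons] at this
  exact this.1 x (mem_filterMap_getLeft.mpr hx)

lemma not_mem_pre {r : Fin (m + 1)} {s t : List (Fin (m + 1) ⊕ B)} {c : Fin (m + 1)}
    (h : σ r = s ++ .inl c :: t) : Sum.inl c ∉ s :=
  fun hx => absurd (block_before hm h hx) (lt_irrefl _)

end Mono

/-- Two decompositions of a list at the same element not occurring in the
prefixes coincide. -/
lemma append_cons_eq {α : Type*} {x : α} :
    ∀ {s₁ s₂ t₁ t₂ : List α}, s₁ ++ x :: t₁ = s₂ ++ x :: t₂ → x ∉ s₁ → x ∉ s₂ →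
      s₁ = s₂ ∧ t₁ = t₂
  | [], [], t₁, t₂, h, _, _ => by simpa using h
  | [], a :: s₂, t₁, t₂, h, h1, h2 => by
      simp only [List.nil_append, List.cons_append, List.cons.injEq] at h
      exact absurd (h.1 ▸ (List.mem_cons_self : a ∈ a :: s₂)) h2
  | a :: s₁, [], t₁, t₂, h, h1, h2 => by
      simp only [List.nil_append, List.cons_append, List.cons.injEq] at h
      exact absurd (h.1.symm ▸ (List.mem_cons_self : a ∈ a :: s₁)) h1
  | a :: s₁, b :: s₂, t₁, t₂, h, h1, h2 => by
      simp only [List.cons_append, List.cons.injEq] at h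
      obtain ⟨hab, h⟩ := h
      have := append_cons_eq h (fun hh => h1 (List.mem_cons_of_mem _ hh))
        (fun hh => h2 (List.mem_cons_of_mem _ hh))
      exact ⟨by rw [hab, this.1], this.2⟩

lemma inr_prefix_eq {c₁ c₂ : Fin (m + 1)} :
    ∀ {w₁ w₂ : List B} {t₁ t₂ : List (Fin (m + 1) ⊕ B)},
      w₁.map Sum.inr ++ .inl c₁ :: t₁ = w₂.map Sum.inr ++ .inl c₂ :: t₂ →
      w₁ = w₂ ∧ c₁ = c₂ ∧ t₁ = t₂
  | [], [], t₁, t₂, h => by simpa using h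
  | [], b :: w₂, t₁, t₂, h => by simp at h
  | b :: w₁, [], t₁, t₂, h => by simp at h
  | b :: w₁, b' :: w₂, t₁, t₂, h => by
      simp only [List.map_cons, List.cons_append, List.cons.injEq, Sum.inr.injEq] at h
      have := inr_prefix_eq h.2
      exact ⟨by rw [h.1, this.1], this.2⟩

lemma last_inl_eq {c₁ c₂ : Fin (m + 1)} :
    ∀ {s₁ s₂ : List (Fin (m + 1) ⊕ B)} {w₁ w₂ : List B},
      s₁ ++ .inl c₁ :: w₁.map Sum.inr = s₂ ++ .inl c₂ :: w₂.map Sum.inr →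
      s₁ = s₂ ∧ c₁ = c₂ ∧ w₁ = w₂
  | [], [], w₁, w₂, h => by
      simp only [List.nil_append, List.cons.injEq, Sum.inl.injEq] at h
      exact ⟨rfl, h.1, List.map_injective_iff.mpr (fun a b => Sum.inr.injEq a b ▸ id) h.2 ⟩
  | [], a :: s₂, w₁, w₂, h => by
      simp only [List.nil_append, List.cons_append, List.cons.injEq] at h
      have : Sum.inl c₂ ∈ (w₁.map Sum.inr : List (Fin (m+1) ⊕ B)) := by
        rw [h.2]; simp
      simp at this
  | a :: s₁, [], w₁, w₂, h => by
      simp only [List.nil_append, List.cons_append, List.cons.injEq] at h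
      have : Sum.inl c₁ ∈ (w₂.map Sum.inr : List (Fin (m+1) ⊕ B)) := by
        rw [← h.2]; simp
      simp at this
  | a :: s₁, b :: s₂, w₁, w₂, h => by
      simp only [List.cons_append, List.cons.injEq] at h
      have := last_inl_eq h.2
      exact ⟨by rw [h.1, this.1], this.2⟩

end Construction
section Mono2
variable {m : ℕ} {A B : Type}
variable {σ : Fin (m + 1) → List (Fin (m + 1) ⊕ B)} (hm : CopylessMonotone σ)
include hm

lemma fact_first_le {r r' c x : Fin (m + 1)} {w : List B} {t : List (Fin (m + 1) ⊕ B)}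
    (h : σ r = w.map Sum.inr ++ .inl c :: t) (hx : Sum.inl x ∈ σ r')
    (hrr : (r : ℕ) ≤ (r' : ℕ)) : (c : ℕ) ≤ (x : ℕ) := by
  rcases lt_or_eq_of_le hrr with hlt | heq
  · exact le_of_lt (cross_mem hm hlt (by simp [h]) hx)
  · have : r = r' := Fin.ext heq
    subst this
    rw [h] at hx
    rcases List.mem_append.mp hx with h1 | h1
    · exfalso; simp at h1
    · rcases List.mem_cons.mp h1 with h2 | h2
      · obtain rfl : c = x := by simpa using h2.symm
        exact le_refl _
      · exact le_of_lt (block_after hm h h2)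

lemma fact_nobetween {r r' c c' x : Fin (m + 1)} {s t : List (Fin (m + 1) ⊕ B)} {w : List B}
    (h : σ r = s ++ .inl c :: (w.map Sum.inr ++ .inl c' :: t)) (hx : Sum.inl x ∈ σ r') :
    (x : ℕ) ≤ (c : ℕ) ∨ (c' : ℕ) ≤ (x : ℕ) := by
  have h' : σ r = (s ++ .inl c :: w.map Sum.inr) ++ .inl c' :: t := by
    rw [h]; simp
  rcases Nat.lt_trichotomy (r' : ℕ) (r : ℕ) with hlt | heq | hgt
  · exact Or.inl (le_of_lt (cross_mem hm hlt hx (by simp [h])))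
  · have : r' = r := Fin.ext heq
    subst this
    rw [h] at hx
    rcases List.mem_append.mp hx with h1 | h1
    · exact Or.inl (le_of_lt (block_before hm h h1))
    · rcases List.mem_cons.mp h1 with h2 | h2
      · obtain rfl : x = c := by simpa using h2
        exact Or.inl (le_refl _)
      · rcases List.mem_append.mp h2 with h3 | h3
        · exfalso; simp at h3
        · rcases List.mem_cons.mp h3 with h4 | h4
          · obtain rfl : x = c' := by simpa using h4
            exact Or.inr (le_refl _)
          · exact Or.inr (le_of_lt (block_after hm h' h4))
  · exact Or.inr (le_of_lt (cross_mem hm hgt (by simp [h]) hx))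

lemma fact_consec_lt {r c c' : Fin (m + 1)} {s t : List (Fin (m + 1) ⊕ B)} {w : List B}
    (h : σ r = s ++ .inl c :: (w.map Sum.inr ++ .inl c' :: t)) : (c : ℕ) < (c' : ℕ) :=
  block_after hm h (by simp)

end Mono2

section Machine
variable {m : ℕ} {A B : Type}

/-- Continue after a parse: descend into the next register, or, if none is
left, ascend finishing register `r''`. -/
def cont (r'' : Fin (m + 1)) (p : List B × Option (Fin (m + 1) × List (Fin (m + 1) ⊕ B))) :
    List B × St m :=
  (p.1, match p.2 with
    | none => .U r''
    | some (c, _) => .D c)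

/-- The transition function of the constructed machine. -/
def delta (T : MonotoneRegTransducer m A B) : Tape A → St m → Option (List B × St m)
  | .lend, .S => some ([], .S)
  | .lend, .D r => some ([], .U r)
  | .rend, .S => some ([], .D 0)
  | .rend, .U r => if r = 0 then some ([], .F) else none
  | .sym a, .S => some ([], .S)
  | .sym a, .D r => some (cont r (parse (T.upd a r)))
  | .sym a, .U c =>
      match findBlock (T.upd a) c (List.finRange (m + 1)) with
      | none => none
      | some (r'', t) => some (cont r'' (parse t))
  | _, _ => none

/-- The constructed two-way transducer. -/
def M (T : MonotoneRegTransducer m A B) : TwoWayTransducer (St m) A B where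
  ρ := rho
  init := .S
  init_fwd := rfl
  final := {.F}
  δ := fun a => {x | delta T a x.1 = some x.2}

variable {T : MonotoneRegTransducer m A B}

lemma mem_delta {a : Tape A} {q q' : St m} {w : List B} :
    (q, w, q') ∈ (M T).δ a ↔ delta T a q = some (w, q') := Iff.rfl

lemma mem_rel {a : Tape A} {q q' : St m} :
    (q, q') ∈ (M T).rel a ↔ ∃ w, delta T a q = some (w, q') := Iff.rfl

lemma M_det : (M T).Deterministic := by
  intro a q r r' hr hr'
  obtain ⟨w, hw⟩ := hr
  obtain ⟨w', hw'⟩ := hr'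
  have h1 : delta T a q = some (w, r) := hw
  have h2 : delta T a q = some (w', r') := hw'
  rw [h1] at h2
  exact congrArg Prod.snd (Option.some.inj h2)

/-- Case analysis of transitions on an input letter. -/
lemma rel_sym_cases {a : A} {q q' : St m} (h : (q, q') ∈ (M T).rel (Tape.sym a)) :
    (q = .S ∧ q' = .S) ∨
    (∃ r c w t, q = .D r ∧ q' = .D c ∧ T.upd a r = (w : List B).map Sum.inr ++ .inl c :: t) ∨
    (∃ r w, q = .D r ∧ q' = .U r ∧ T.upd a r = (w : List B).map Sum.inr) ∨
    (∃ c c' r'' s w t, q = .U c ∧ q' = .D c' ∧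
      T.upd a r'' = s ++ .inl c :: ((w : List B).map Sum.inr ++ .inl c' :: t)) ∨
    (∃ c r'' s w, q = .U c ∧ q' = .U r'' ∧ T.upd a r'' = s ++ .inl c :: (w : List B).map Sum.inr) := by
  obtain ⟨w₀, hd₀⟩ := h
  cases q with
  | S =>
      have hd : some (([] : List B), (St.S : St m)) = some (w₀, q') := hd₀
      exact Or.inl ⟨rfl, (congrArg Prod.snd (Option.some.inj hd)).symm⟩
  | F => exact absurd (show (none : Option (List B × St m)) = some (w₀, q') from hd₀) (by simp)
  | D r =>
      have hd : some (cont r (parse (T.upd a r))) = some (w₀, q') := hd₀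
      rcases hp : parse (T.upd a r) with ⟨w, o⟩
      rw [hp] at hd
      rcases o with _ | ⟨c, t⟩
      · refine Or.inr (Or.inr (Or.inl ⟨r, w, rfl, ?_, parse_none hp⟩))
        exact (congrArg Prod.snd (Option.some.inj hd) : (St.U r : St m) = q').symm
      · refine Or.inr (Or.inl ⟨r, c, w, t, rfl, ?_, parse_some hp⟩)
        exact (congrArg Prod.snd (Option.some.inj hd) : (St.D c : St m) = q').symm
  | U c =>
      have hd₁ : (match findBlock (T.upd a) c (List.finRange (m + 1)) with
              | none => none
              | some (r'', t) => some (cont r'' (parse t))) = some (w₀, q') := hd₀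
      rcases hf : findBlock (T.upd a) c (List.finRange (m + 1)) with _ | ⟨r'', t⟩
      · rw [hf] at hd₁
        exact absurd hd₁ (by simp)
      · rw [hf] at hd₁
        have hd : some (cont r'' (parse t)) = some (w₀, q') := hd₁
        obtain ⟨s, hs⟩ := findBlock_sound hf
        rcases hp : parse t with ⟨w, o⟩
        rw [hp] at hd
        rcases o with _ | ⟨c', t'⟩
        · refine Or.inr (Or.inr (Or.inr (Or.inr ⟨c, r'', s, w, rfl, ?_, by
            rw [hs, parse_none hp]⟩)))
          exact (congrArg Prod.snd (Option.some.inj hd) : (St.U r'' : St m) = q').symm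
        · refine Or.inr (Or.inr (Or.inr (Or.inl ⟨c, c', r'', s, w, t', rfl, ?_, by
            rw [hs, parse_some hp]⟩)))
          exact (congrArg Prod.snd (Option.some.inj hd) : (St.D c' : St m) = q').symm

end Machine
section Runs
variable {m : ℕ} {A B : Type} {T : MonotoneRegTransducer m A B}

/-- `▷` followed by an encoded input prefix. -/
def tapeL (w : List A) : List (Tape A) := Tape.lend :: w.map Tape.sym

lemma tapeOf_eq (u : List A) : tapeOf u = tapeL u ++ [Tape.rend] := by
  simp [tapeOf, tapeL]

lemma tapeL_snoc (w : List A) (b : A) : tapeL (w ++ [b]) = tapeL w ++ [Tape.sym b] := by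
  simp [tapeL]

/-- The register valuation after reading a prefix. -/
def val (T : MonotoneRegTransducer m A B) (w : List A) : Fin (m + 1) → List B :=
  w.foldl (fun v a => applyUpdate (T.upd a) v) (fun _ => [])

lemma val_snoc (w : List A) (b : A) :
    val T (w ++ [b]) = applyUpdate (T.upd b) (val T w) := by
  simp [val, List.foldl_append]

/-- Value of a register-word under a valuation. -/
def procVal (v : Fin (m + 1) → List B) (t : List (Fin (m + 1) ⊕ B)) : List B :=
  (t.map (Sum.elim v fun b => [b])).flatten

lemma applyUpdate_eq (σ : Fin (m+1) → List (Fin (m+1) ⊕ B)) (v : Fin (m+1) → List B)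
    (r : Fin (m+1)) : applyUpdate σ v r = procVal v (σ r) := rfl

lemma procVal_inr (v : Fin (m + 1) → List B) (w : List B) :
    procVal v (w.map Sum.inr) = w := by
  induction w with
  | nil => rfl
  | cons b w ih => simp [procVal] at ih ⊢; exact ih

lemma procVal_decomp (v : Fin (m + 1) → List B) (w : List B) (c : Fin (m+1))
    (t : List (Fin (m+1) ⊕ B)) :
    procVal v (w.map Sum.inr ++ .inl c :: t) = w ++ (v c ++ procVal v t) := by
  induction w with
  | nil => simp [procVal]
  | cons b w ih => simpa [procVal] using ih

lemma step_ff {q r : St m} {a u v w} (h : delta T a q = some (w, r)) (hq : rho q = true)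
    (hr : rho r = true) : (M T).Step (u, q, a :: v) w (u ++ [a], r, v) :=
  ⟨a, u, v, q, r, h, Or.inl ⟨hq, hr, rfl, rfl⟩⟩

lemma step_fb {q r : St m} {a u v w} (h : delta T a q = some (w, r)) (hq : rho q = true)
    (hr : rho r = false) : (M T).Step (u, q, a :: v) w (u, r, a :: v) :=
  ⟨a, u, v, q, r, h, Or.inr (Or.inl ⟨hq, hr, rfl, rfl⟩)⟩

lemma step_bb {q r : St m} {a u v w} (h : delta T a q = some (w, r)) (hq : rho q = false)
    (hr : rho r = false) : (M T).Step (u ++ [a], q, v) w (u, r, a :: v) :=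
  ⟨a, u, v, q, r, h, Or.inr (Or.inr (Or.inl ⟨hq, hr, rfl, rfl⟩))⟩

lemma step_bf {q r : St m} {a u v w} (h : delta T a q = some (w, r)) (hq : rho q = false)
    (hr : rho r = true) : (M T).Step (u ++ [a], q, v) w (u ++ [a], r, v) :=
  ⟨a, u, v, q, r, h, Or.inr (Or.inr (Or.inr ⟨hq, hr, rfl, rfl⟩))⟩

lemma run_single {c w c'} (h : (M T).Step c w c') : (M T).Run c w c' := by
  have h2 := TwoWayTransducer.Run.step (TwoWayTransducer.Run.refl c) h
  simpa using h2

lemma run_trans {c₁ w₁ c₂ w₂ c₃} (h₁ : (M T).Run c₁ w₁ c₂) (h₂ : (M T).Run c₂ w₂ c₃) :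
    (M T).Run c₁ (w₁ ++ w₂) c₃ := by
  induction h₂ with
  | refl => simpa using h₁
  | step hr hs ih => rw [← List.append_assoc]; exact .step ih hs

lemma run_inner (b : A) (w' : List A)
    (IH : ∀ (c : Fin (m + 1)) (R0 : List (Tape A)),
      (M T).Run (tapeL w', .D c, R0) (val T w' c) (tapeL w', .U c, R0)) :
    ∀ (k : ℕ) (t s : List (Fin (m + 1) ⊕ B)) (c r'' : Fin (m + 1)) (R0 : List (Tape A)),
      t.length ≤ k → T.upd b r'' = s ++ .inl c :: t →
      (M T).Run (tapeL w', .D c, Tape.sym b :: R0)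
        (val T w' c ++ procVal (val T w') t)
        (tapeL w' ++ [Tape.sym b], .U r'', R0) := by
  intro k
  induction k with
  | zero =>
      intro t s c r'' R0 hk hdec
      have ht : t = [] := List.length_eq_zero_iff.mp (Nat.le_zero.mp hk)
      subst ht
      have hfb : findBlock (T.upd b) c (List.finRange (m + 1)) = some (r'', []) :=
        findBlock_eq (List.mem_finRange _)
          (fun r' _ hc' => block_unique (T.mono b) hc' (by simp [hdec]))
          (by rw [hdec]; exact afterOcc_eq (not_mem_pre (T.mono b) hdec))
      have hdU : delta T (.sym b) (.U c) = some (([] : List B), .U r'') := by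
        have h0 : delta T (.sym b) (.U c) =
            (match findBlock (T.upd b) c (List.finRange (m + 1)) with
              | none => none
              | some (r'', t) => some (cont r'' (parse t))) := rfl
        rw [h0, hfb]; rfl
      have stp := step_ff (u := tapeL w') (a := Tape.sym b) (v := R0) hdU rfl rfl
      have R := run_trans (IH c (Tape.sym b :: R0)) (run_single stp)
      simpa [procVal] using R
  | succ k ihk =>
      intro t s c r'' R0 hk hdec
      have hfb : findBlock (T.upd b) c (List.finRange (m + 1)) = some (r'', t) :=
        findBlock_eq (List.mem_finRange _)
          (fun r' _ hc' => block_unique (T.mono b) hc' (by simp [hdec]))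
          (by rw [hdec]; exact afterOcc_eq (not_mem_pre (T.mono b) hdec))
      have hdU0 : delta T (.sym b) (.U c) = some (cont r'' (parse t)) := by
        have h0 : delta T (.sym b) (.U c) =
            (match findBlock (T.upd b) c (List.finRange (m + 1)) with
              | none => none
              | some (r'', t) => some (cont r'' (parse t))) := rfl
        rw [h0, hfb]
      rcases hp : parse t with ⟨w, o⟩
      rcases o with _ | ⟨c₂, t₂⟩
      · have hdU : delta T (.sym b) (.U c) = some (w, .U r'') := by rw [hdU0, hp]; rfl
        have stp := step_ff (u := tapeL w') (a := Tape.sym b) (v := R0) hdU rfl rfl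
        have R := run_trans (IH c (Tape.sym b :: R0)) (run_single stp)
        rw [parse_none hp, procVal_inr]
        exact R
      · have hdU : delta T (.sym b) (.U c) = some (w, .D c₂) := by rw [hdU0, hp]; rfl
        have stp := step_fb (u := tapeL w') (a := Tape.sym b) (v := R0) hdU rfl rfl
        have hdec₂ : T.upd b r'' = (s ++ .inl c :: w.map Sum.inr) ++ .inl c₂ :: t₂ := by
          rw [hdec, parse_some hp]; simp
        have hlen : t₂.length ≤ k := by
          have h1 := congrArg List.length (parse_some hp)
          simp at h1
          omega
        have R2 := ihk t₂ (s ++ .inl c :: w.map Sum.inr) c₂ r'' R0 hlen hdec₂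
        have R := run_trans (IH c (Tape.sym b :: R0))
          (run_trans (run_single stp) R2)
        rw [parse_some hp, procVal_decomp]
        simpa [List.append_assoc] using R

lemma run_main : ∀ (w : List A) (c : Fin (m + 1)) (R0 : List (Tape A)),
    (M T).Run (tapeL w, .D c, R0) (val T w c) (tapeL w, .U c, R0) := by
  intro w
  induction w using List.reverseRecOn with
  | nil =>
      intro c R0
      have hδ : delta T .lend (.D c) = some ([], .U c) := rfl
      have stp := step_bf (u := ([] : List (Tape A))) (a := Tape.lend) (v := R0) hδ rfl rfl
      simpa [tapeL, val] using run_single stp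
  | append_singleton w' b ihw =>
      intro c R0
      rw [tapeL_snoc, val_snoc]
      have hdD : delta T (.sym b) (.D c) = some (cont c (parse (T.upd b c))) := rfl
      rcases hp : parse (T.upd b c) with ⟨w, o⟩
      rcases o with _ | ⟨c₁, t⟩
      · have hδ : delta T (.sym b) (.D c) = some (w, .U c) := by rw [hdD, hp]; rfl
        have stp := step_bf (u := tapeL w') (a := Tape.sym b) (v := R0) hδ rfl rfl
        have hv : applyUpdate (T.upd b) (val T w') c = w := by
          rw [applyUpdate_eq, parse_none hp, procVal_inr]
        rw [hv]
        exact run_single stp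
      · have hδ : delta T (.sym b) (.D c) = some (w, .D c₁) := by rw [hdD, hp]; rfl
        have stp := step_bb (u := tapeL w') (a := Tape.sym b) (v := R0) hδ rfl rfl
        have inner := run_inner b w' ihw t.length t (w.map Sum.inr) c₁ c R0 le_rfl (parse_some hp)
        have R := run_trans (run_single stp) inner
        have hv : applyUpdate (T.upd b) (val T w') c =
            w ++ (val T w' c₁ ++ procVal (val T w') t) := by
          rw [applyUpdate_eq, parse_some hp, procVal_decomp]
        rw [hv]
        exact R

lemma run_sweep : ∀ (us : List A) (L : List (Tape A)) (R0 : List (Tape A)),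
    (M T).Run (L, .S, us.map Tape.sym ++ R0) [] (L ++ us.map Tape.sym, .S, R0) := by
  intro us
  induction us with
  | nil => intro L R0; simpa using TwoWayTransducer.Run.refl (T := M T) (L, .S, R0)
  | cons a us ih =>
      intro L R0
      have hδ : delta T (.sym a) (.S) = some ([], .S) := rfl
      have stp := step_ff (u := L) (a := Tape.sym a) (v := us.map Tape.sym ++ R0) hδ rfl rfl
      have R := run_trans (run_single stp) (ih (L ++ [Tape.sym a]) R0)
      simpa [List.append_assoc] using R

lemma accepts (u : List A) : (M T).Realizes u (T.fn u) := by
  refine ⟨.F, rfl, ?_⟩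
  have s1 : (M T).Step ([], .S, tapeOf u) [] ([Tape.lend], .S, u.map Tape.sym ++ [Tape.rend]) := by
    have hδ : delta T .lend (.S) = some ([], .S) := rfl
    have := step_ff (u := ([] : List (Tape A))) (a := Tape.lend)
      (v := u.map Tape.sym ++ [Tape.rend]) hδ rfl rfl
    simpa [tapeOf] using this
  have s2 := run_sweep (T := T) u [Tape.lend] [Tape.rend]
  have s3 : (M T).Step (tapeL u, .S, [Tape.rend]) [] (tapeL u, .D 0, [Tape.rend]) := by
    have hδ : delta T .rend (.S) = some ([], .D 0) := rfl
    have := step_fb (u := tapeL u) (a := Tape.rend) (v := ([] : List (Tape A))) hδ rfl rfl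
    exact this
  have s4 := run_main (T := T) u 0 [Tape.rend]
  have s5 : (M T).Step (tapeL u, .U 0, [Tape.rend]) [] (tapeOf u, .F, []) := by
    have hδ : delta T .rend (.U 0) = some ([], .F) := by simp [delta]
    have := step_ff (u := tapeL u) (a := Tape.rend) (v := ([] : List (Tape A))) hδ rfl rfl
    simpa [tapeOf_eq] using this
  have hL : ([Tape.lend] : List (Tape A)) ++ u.map Tape.sym = tapeL u := by simp [tapeL]
  have R := run_trans (run_single s1) (run_trans (hL ▸ s2)
    (run_trans (run_single s3) (run_trans s4 (run_single s5))))
  have hfn : val T u 0 = T.fn u := rfl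
  exact (show (M T).Run ([], St.S, tapeOf u) (T.fn u) (tapeOf u, St.F, []) by simpa [hfn] using R)

end Runs
section Uniqueness
variable {m : ℕ} {A B : Type} {T : MonotoneRegTransducer m A B}

lemma step_inv_fwd {u : List (Tape A)} {q : St m} {a v w c'} (hq : rho q = true)
    (h : (M T).Step (u, q, a :: v) w c') :
    ∃ r, delta T a q = some (w, r) ∧
      ((rho r = true ∧ c' = (u ++ [a], r, v)) ∨ (rho r = false ∧ c' = (u, r, a :: v))) := by
  obtain ⟨a', u', v', q', r', hδ, hcase⟩ := h
  have hδ : delta T a' q' = some (w, r') := hδ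
  rcases hcase with ⟨hq', hr', hc, hc1⟩ | ⟨hq', hr', hc, hc1⟩ | ⟨hq', hr', hc, hc1⟩ |
    ⟨hq', hr', hc, hc1⟩
  · obtain ⟨h1, h2, h3, h4⟩ : u = u' ∧ q = q' ∧ a = a' ∧ v = v' := by
      simpa [Prod.ext_iff] using hc
    subst h1; subst h2; subst h3; subst h4
    exact ⟨r', hδ, Or.inl ⟨hr', hc1⟩⟩
  · obtain ⟨h1, h2, h3, h4⟩ : u = u' ∧ q = q' ∧ a = a' ∧ v = v' := by
      simpa [Prod.ext_iff] using hc
    subst h1; subst h2; subst h3; subst h4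
    exact ⟨r', hδ, Or.inr ⟨hr', hc1⟩⟩
  · obtain ⟨h1, h2, h3⟩ : u = u' ++ [a'] ∧ q = q' ∧ a :: v = v' := by
      simpa [Prod.ext_iff] using hc
    have hq'' : rho q' = false := hq'
    rw [h2, hq''] at hq; cases hq
  · obtain ⟨h1, h2, h3⟩ : u = u' ++ [a'] ∧ q = q' ∧ a :: v = v' := by
      simpa [Prod.ext_iff] using hc
    have hq'' : rho q' = false := hq'
    rw [h2, hq''] at hq; cases hq

lemma step_inv_bwd {u : List (Tape A)} {q : St m} {a v w c'} (hq : rho q = false)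
    (h : (M T).Step (u ++ [a], q, v) w c') :
    ∃ r, delta T a q = some (w, r) ∧
      ((rho r = false ∧ c' = (u, r, a :: v)) ∨ (rho r = true ∧ c' = (u ++ [a], r, v))) := by
  obtain ⟨a', u', v', q', r', hδ, hcase⟩ := h
  have hδ : delta T a' q' = some (w, r') := hδ
  rcases hcase with ⟨hq', hr', hc, hc1⟩ | ⟨hq', hr', hc, hc1⟩ | ⟨hq', hr', hc, hc1⟩ |
    ⟨hq', hr', hc, hc1⟩
  · obtain ⟨h1, h2, h3⟩ : u ++ [a] = u' ∧ q = q' ∧ v = a' :: v' := by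
      simpa [Prod.ext_iff] using hc
    have hq'' : rho q' = true := hq'
    rw [h2, hq''] at hq; cases hq
  · obtain ⟨h1, h2, h3⟩ : u ++ [a] = u' ∧ q = q' ∧ v = a' :: v' := by
      simpa [Prod.ext_iff] using hc
    have hq'' : rho q' = true := hq'
    rw [h2, hq''] at hq; cases hq
  · obtain ⟨h1, h2, h3⟩ : u ++ [a] = u' ++ [a'] ∧ q = q' ∧ v = v' := by
      simpa [Prod.ext_iff] using hc
    obtain ⟨h4, h5⟩ := List.append_inj' h1 rfl
    obtain rfl : a = a' := by simpa using h5
    subst h4; subst h2; subst h3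
    exact ⟨r', hδ, Or.inl ⟨hr', hc1⟩⟩
  · obtain ⟨h1, h2, h3⟩ : u ++ [a] = u' ++ [a'] ∧ q = q' ∧ v = v' := by
      simpa [Prod.ext_iff] using hc
    obtain ⟨h4, h5⟩ := List.append_inj' h1 rfl
    obtain rfl : a = a' := by simpa using h5
    subst h4; subst h2; subst h3
    exact ⟨r', hδ, Or.inr ⟨hr', hc1⟩⟩

lemma step_det {c : Config (St m) A} {w₁ c₁ w₂ c₂} (h₁ : (M T).Step c w₁ c₁)
    (h₂ : (M T).Step c w₂ c₂) : w₁ = w₂ ∧ c₁ = c₂ := by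
  obtain ⟨a, u, v, q, r, hδ, hcase⟩ := h₁
  have hδ : delta T a q = some (w₁, r) := hδ
  rcases hcase with ⟨hq, hr, hc, hc1⟩ | ⟨hq, hr, hc, hc1⟩ | ⟨hq, hr, hc, hc1⟩ |
    ⟨hq, hr, hc, hc1⟩ <;> subst hc
  · obtain ⟨r₂, hδ₂, hd⟩ := step_inv_fwd hq h₂
    rw [hδ] at hδ₂
    obtain ⟨hw, hrr⟩ : w₂ = w₁ ∧ r₂ = r := by simpa [Prod.ext_iff] using hδ₂.symm
    subst hw
    rw [hrr] at hd
    have hrho : rho r = _ := hr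
    rcases hd with ⟨-, hd⟩ | ⟨hr2, hd⟩
    · exact ⟨rfl, hc1.trans hd.symm⟩
    · rw [hrho] at hr2; cases hr2
  · obtain ⟨r₂, hδ₂, hd⟩ := step_inv_fwd hq h₂
    rw [hδ] at hδ₂
    obtain ⟨hw, hrr⟩ : w₂ = w₁ ∧ r₂ = r := by simpa [Prod.ext_iff] using hδ₂.symm
    subst hw
    rw [hrr] at hd
    have hrho : rho r = _ := hr
    rcases hd with ⟨hr2, hd⟩ | ⟨-, hd⟩
    · rw [hrho] at hr2; cases hr2
    · exact ⟨rfl, hc1.trans hd.symm⟩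
  · obtain ⟨r₂, hδ₂, hd⟩ := step_inv_bwd hq h₂
    rw [hδ] at hδ₂
    obtain ⟨hw, hrr⟩ : w₂ = w₁ ∧ r₂ = r := by simpa [Prod.ext_iff] using hδ₂.symm
    subst hw
    rw [hrr] at hd
    have hrho : rho r = _ := hr
    rcases hd with ⟨-, hd⟩ | ⟨hr2, hd⟩
    · exact ⟨rfl, hc1.trans hd.symm⟩
    · rw [hrho] at hr2; cases hr2
  · obtain ⟨r₂, hδ₂, hd⟩ := step_inv_bwd hq h₂
    rw [hδ] at hδ₂
    obtain ⟨hw, hrr⟩ : w₂ = w₁ ∧ r₂ = r := by simpa [Prod.ext_iff] using hδ₂.symm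
    subst hw
    rw [hrr] at hd
    have hrho : rho r = _ := hr
    rcases hd with ⟨hr2, hd⟩ | ⟨-, hd⟩
    · rw [hrho] at hr2; cases hr2
    · exact ⟨rfl, hc1.trans hd.symm⟩

/-- Runs with steps peeled from the front. -/
inductive RunL (Mach : TwoWayTransducer (St m) A B) :
    Config (St m) A → List B → Config (St m) A → Prop
  | refl (c : Config (St m) A) : RunL Mach c [] c
  | step {c w c' v d} : Mach.Step c w c' → RunL Mach c' v d → RunL Mach c (w ++ v) d

lemma runL_snoc {c v d w e} (h : RunL (M T) c v d) (hs : (M T).Step d w e) :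
    RunL (M T) c (v ++ w) e := by
  induction h with
  | refl => simpa using RunL.step hs (RunL.refl e)
  | step s hr ih => rw [List.append_assoc]; exact RunL.step s (ih hs)

lemma run_to_runL {c v d} (h : (M T).Run c v d) : RunL (M T) c v d := by
  induction h with
  | refl => exact RunL.refl _
  | step hr hs ih => exact runL_snoc ih hs

/-- A configuration with no outgoing step. -/
def StuckCfg (Mach : TwoWayTransducer (St m) A B) (c : Config (St m) A) : Prop :=
  ∀ w c', ¬ Mach.Step c w c'

lemma stuck_nil {L : List (Tape A)} {q : St m} (hq : rho q = true) :
    StuckCfg (M T) (L, q, []) := by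
  intro w c' h
  obtain ⟨a, u, v, q', r, hδ, hcase⟩ := h
  rcases hcase with ⟨hq', hr', hc, _⟩ | ⟨hq', hr', hc, _⟩ | ⟨hq', hr', hc, _⟩ |
    ⟨hq', hr', hc, _⟩
  · obtain ⟨-, -, h3⟩ : L = u ∧ q = q' ∧ ([] : List (Tape A)) = a :: v := by
      simpa [Prod.ext_iff] using hc
    cases h3
  · obtain ⟨-, -, h3⟩ : L = u ∧ q = q' ∧ ([] : List (Tape A)) = a :: v := by
      simpa [Prod.ext_iff] using hc
    cases h3
  · obtain ⟨-, h2, -⟩ : L = u ++ [a] ∧ q = q' ∧ ([] : List (Tape A)) = v := by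
      simpa [Prod.ext_iff] using hc
    have hq'' : rho q' = false := hq'
    rw [h2, hq''] at hq; cases hq
  · obtain ⟨-, h2, -⟩ : L = u ++ [a] ∧ q = q' ∧ ([] : List (Tape A)) = v := by
      simpa [Prod.ext_iff] using hc
    have hq'' : rho q' = false := hq'
    rw [h2, hq''] at hq; cases hq

lemma runL_unique {c v d} (h : RunL (M T) c v d) (hd : StuckCfg (M T) d) :
    ∀ {v' d'}, RunL (M T) c v' d' → StuckCfg (M T) d' → v = v' ∧ d = d' := by
  induction h with
  | refl =>
      intro v' d' h2 hd2
      cases h2 with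
      | refl => exact ⟨rfl, rfl⟩
      | step s hr => exact absurd s (hd _ _)
  | step s hr ih =>
      intro v' d' h2 hd2
      cases h2 with
      | refl => exact absurd s (hd2 _ _)
      | step s2 hr2 =>
          obtain ⟨hw, hc⟩ := step_det s s2
          subst hw; subst hc
          obtain ⟨h1, h2⟩ := ih hd hr2 hd2
          exact ⟨by rw [h1], h2⟩

lemma canonical_run (u : List A) :
    (M T).Run ([], .S, tapeOf u) (T.fn u) (tapeOf u, .F, []) := by
  obtain ⟨qf, hqf, hrun⟩ := accepts (T := T) u
  obtain rfl : qf = .F := hqf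
  exact hrun

lemma realizes_unique {u : List A} {v : List B} (h : (M T).Realizes u v) : v = T.fn u := by
  obtain ⟨qf, hqf, hrun⟩ := h
  obtain rfl : qf = .F := hqf
  have h1 := run_to_runL hrun
  have h2 := run_to_runL (canonical_run (T := T) u)
  exact (runL_unique h1 (stuck_nil rfl) h2 (stuck_nil rfl)).1

lemma M_computes : (M T).Computes (fun w => some (T.fn w)) := by
  intro u v
  constructor
  · intro h
    obtain rfl : T.fn u = v := by simpa using h
    exact accepts u
  · intro h
    rw [realizes_unique h]

end Uniqueness
section Reversible
variable {m : ℕ} {A B : Type} {T : MonotoneRegTransducer m A B}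

lemma delta_lend_inv {q x : St m} {w : List B} (h : delta T .lend q = some (w, x)) :
    (q = .S ∧ x = .S) ∨ (∃ r, q = .D r ∧ x = .U r) := by
  cases q with
  | S =>
      have h' : some (([] : List B), (St.S : St m)) = some (w, x) := h
      exact Or.inl ⟨rfl, (congrArg Prod.snd (Option.some.inj h')).symm⟩
  | F => exact absurd (show (none : Option (List B × St m)) = some (w, x) from h) (by simp)
  | D r =>
      have h' : some (([] : List B), (St.U r : St m)) = some (w, x) := h
      exact Or.inr ⟨r, rfl, (congrArg Prod.snd (Option.some.inj h')).symm⟩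
  | U r => exact absurd (show (none : Option (List B × St m)) = some (w, x) from h) (by simp)

lemma delta_rend_inv {q x : St m} {w : List B} (h : delta T .rend q = some (w, x)) :
    (q = .S ∧ x = .D 0) ∨ (q = .U 0 ∧ x = .F) := by
  cases q with
  | S =>
      have h' : some (([] : List B), (St.D 0 : St m)) = some (w, x) := h
      exact Or.inl ⟨rfl, (congrArg Prod.snd (Option.some.inj h')).symm⟩
  | F => exact absurd (show (none : Option (List B × St m)) = some (w, x) from h) (by simp)
  | D r => exact absurd (show (none : Option (List B × St m)) = some (w, x) from h) (by simp)
  | U r =>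
      have h' : (if r = 0 then some (([] : List B), (St.F : St m)) else none) = some (w, x) := h
      by_cases hr : r = 0
      · rw [if_pos hr] at h'
        exact Or.inr ⟨by rw [hr], (congrArg Prod.snd (Option.some.inj h')).symm⟩
      · rw [if_neg hr] at h'
        cases h'

lemma M_rev : (M T).Reversible := by
  intro a
  refine ⟨M_det a, ?_⟩
  intro q q' r hq hq'
  cases a with
  | lend =>
      obtain ⟨w, h⟩ := hq
      obtain ⟨w', h'⟩ := hq'
      have h : delta T .lend q = some (w, r) := h
      have h' : delta T .lend q' = some (w', r) := h'
      rcases delta_lend_inv h with ⟨hq1, hr1⟩ | ⟨r₁, hq1, hr1⟩ <;>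
        rcases delta_lend_inv h' with ⟨hq2, hr2⟩ | ⟨r₂, hq2, hr2⟩
      · exact hq1.trans hq2.symm
      · exact absurd (hr1.symm.trans hr2) (by simp)
      · exact absurd (hr1.symm.trans hr2) (by simp)
      · obtain rfl : r₁ = r₂ := St.U.inj (hr1.symm.trans hr2)
        exact hq1.trans hq2.symm
  | rend =>
      obtain ⟨w, h⟩ := hq
      obtain ⟨w', h'⟩ := hq'
      have h : delta T .rend q = some (w, r) := h
      have h' : delta T .rend q' = some (w', r) := h'
      rcases delta_rend_inv h with ⟨hq1, hr1⟩ | ⟨hq1, hr1⟩ <;>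
        rcases delta_rend_inv h' with ⟨hq2, hr2⟩ | ⟨hq2, hr2⟩
      · exact hq1.trans hq2.symm
      · exact absurd (hr1.symm.trans hr2) (by simp)
      · exact absurd (hr1.symm.trans hr2) (by simp)
      · exact hq1.trans hq2.symm
  | sym a =>
      rcases rel_sym_cases hq with ⟨hq1, hr1⟩ | ⟨r₁, c₁, w₁, t₁, hq1, hr1, hd1⟩ |
        ⟨r₁, w₁, hq1, hr1, hd1⟩ | ⟨c₁, c₁', r₁, s₁, w₁, t₁, hq1, hr1, hd1⟩ |
        ⟨c₁, r₁, s₁, w₁, hq1, hr1, hd1⟩ <;>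
      rcases rel_sym_cases hq' with ⟨hq2, hr2⟩ | ⟨r₂, c₂, w₂, t₂, hq2, hr2, hd2⟩ |
        ⟨r₂, w₂, hq2, hr2, hd2⟩ | ⟨c₂, c₂', r₂, s₂, w₂, t₂, hq2, hr2, hd2⟩ |
        ⟨c₂, r₂, s₂, w₂, hq2, hr2, hd2⟩
      -- (1,1)
      · exact hq1.trans hq2.symm
      · exact absurd (hr1.symm.trans hr2) (by simp)
      · exact absurd (hr1.symm.trans hr2) (by simp)
      · exact absurd (hr1.symm.trans hr2) (by simp)
      · exact absurd (hr1.symm.trans hr2) (by simp)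
      -- (2,·)
      · exact absurd (hr1.symm.trans hr2) (by simp)
      · -- (2,2)
        obtain rfl : c₁ = c₂ := St.D.inj (hr1.symm.trans hr2)
        obtain rfl : r₁ = r₂ := block_unique (T.mono a) (c := c₁) (by simp [hd1]) (by simp [hd2])
        exact hq1.trans hq2.symm
      · exact absurd (hr1.symm.trans hr2) (by simp)
      · -- (2,4)
        obtain rfl : c₁ = c₂' := St.D.inj (hr1.symm.trans hr2)
        have hd2' : T.upd a r₂ = (s₂ ++ .inl c₂ :: w₂.map Sum.inr) ++ .inl c₁ :: t₂ := by
          rw [hd2]; simp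
        obtain rfl : r₁ = r₂ := block_unique (T.mono a) (c := c₁) (by simp [hd1]) (by simp [hd2'])
        have heq := append_cons_eq (hd1.symm.trans hd2') (by simp)
          (not_mem_pre (T.mono a) hd2')
        have : Sum.inl c₂ ∈ (w₁.map Sum.inr : List (Fin (m+1) ⊕ B)) := by
          rw [heq.1]; simp
        simp at this
      · exact absurd (hr1.symm.trans hr2) (by simp)
      -- (3,·)
      · exact absurd (hr1.symm.trans hr2) (by simp)
      · exact absurd (hr1.symm.trans hr2) (by simp)
      · -- (3,3)
        obtain rfl : r₁ = r₂ := St.U.inj (hr1.symm.trans hr2)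
        exact hq1.trans hq2.symm
      · exact absurd (hr1.symm.trans hr2) (by simp)
      · -- (3,5)
        obtain rfl : r₁ = r₂ := St.U.inj (hr1.symm.trans hr2)
        have : Sum.inl c₂ ∈ (w₁.map Sum.inr : List (Fin (m+1) ⊕ B)) := by
          rw [← hd1, hd2]; simp
        simp at this
      -- (4,·)
      · exact absurd (hr1.symm.trans hr2) (by simp)
      · -- (4,2)
        obtain rfl : c₁' = c₂ := St.D.inj (hr1.symm.trans hr2)
        have hd1' : T.upd a r₁ = (s₁ ++ .inl c₁ :: w₁.map Sum.inr) ++ .inl c₁' :: t₁ := by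
          rw [hd1]; simp
        obtain rfl : r₁ = r₂ := block_unique (T.mono a) (c := c₁') (by simp [hd1']) (by simp [hd2])
        have heq := append_cons_eq (hd2.symm.trans hd1') (by simp)
          (not_mem_pre (T.mono a) hd1')
        have : Sum.inl c₁ ∈ (w₂.map Sum.inr : List (Fin (m+1) ⊕ B)) := by
          rw [heq.1]; simp
        simp at this
      · exact absurd (hr1.symm.trans hr2) (by simp)
      · -- (4,4)
        obtain rfl : c₁' = c₂' := St.D.inj (hr1.symm.trans hr2)
        have hd1' : T.upd a r₁ = (s₁ ++ .inl c₁ :: w₁.map Sum.inr) ++ .inl c₁' :: t₁ := by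
          rw [hd1]; simp
        have hd2' : T.upd a r₂ = (s₂ ++ .inl c₂ :: w₂.map Sum.inr) ++ .inl c₁' :: t₂ := by
          rw [hd2]; simp
        obtain rfl : r₁ = r₂ := block_unique (T.mono a) (c := c₁') (by simp [hd1']) (by simp [hd2'])
        have heq := append_cons_eq (hd1'.symm.trans hd2') (not_mem_pre (T.mono a) hd1')
          (not_mem_pre (T.mono a) hd2')
        obtain ⟨-, rfl, -⟩ := last_inl_eq heq.1
        exact hq1.trans hq2.symm
      · exact absurd (hr1.symm.trans hr2) (by simp)
      -- (5,·)
      · exact absurd (hr1.symm.trans hr2) (by simp)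
      · exact absurd (hr1.symm.trans hr2) (by simp)
      · -- (5,3)
        obtain rfl : r₁ = r₂ := St.U.inj (hr1.symm.trans hr2)
        have : Sum.inl c₁ ∈ (w₂.map Sum.inr : List (Fin (m+1) ⊕ B)) := by
          rw [← hd2, hd1]; simp
        simp at this
      · exact absurd (hr1.symm.trans hr2) (by simp)
      · -- (5,5)
        obtain rfl : r₁ = r₂ := St.U.inj (hr1.symm.trans hr2)
        obtain ⟨-, rfl, -⟩ := last_inl_eq (hd1.symm.trans hd2)
        exact hq1.trans hq2.symm

end Reversible
section Planarity
variable {m : ℕ} {A B : Type} {T : MonotoneRegTransducer m A B}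

/-- Height of a state along the planar order. -/
def hgt : St m → ℕ
  | .D r => 2 * (r : ℕ) + 1
  | .U r => 2 * (r : ℕ) + 2
  | .F => 2 * m + 3
  | .S => 2 * m + 4

lemma hgt_pos (q : St m) : 0 < hgt q := by
  cases q <;> simp [hgt]

lemma hgt_inj {x y : St m} (h : hgt x = hgt y) : x = y := by
  cases x with
  | S => cases y with
    | S => rfl
    | F => simp [hgt] at h
    | D r => exfalso; have := r.is_le; simp only [hgt] at h; omega
    | U r => exfalso; have := r.is_le; simp only [hgt] at h; omega
  | F => cases y with
    | S => simp [hgt] at h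
    | F => rfl
    | D r => exfalso; have := r.is_le; simp only [hgt] at h; omega
    | U r => exfalso; have := r.is_le; simp only [hgt] at h; omega
  | D r => cases y with
    | S => exfalso; have := r.is_le; simp only [hgt] at h; omega
    | F => exfalso; have := r.is_le; simp only [hgt] at h; omega
    | D r' => have : r = r' := Fin.ext (by simp only [hgt] at h; omega); rw [this]
    | U r' => exfalso; simp only [hgt] at h; omega
  | U r => cases y with
    | S => exfalso; have := r.is_le; simp only [hgt] at h; omega
    | F => exfalso; have := r.is_le; simp only [hgt] at h; omega
    | D r' => exfalso; simp only [hgt] at h; omega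
    | U r' => have : r = r' := Fin.ext (by simp only [hgt] at h; omega); rw [this]

lemma slt_STO : IsStrictTotalOrder (St m) (fun q q' => hgt q < hgt q') := by
  letI : IsTrichotomous (St m) (fun q q' => hgt q < hgt q') := ⟨by
    intro a b
    rcases Nat.lt_trichotomy (hgt a) (hgt b) with h | h | h
    · exact fun h1 => absurd h h1
    · exact fun _ _ => hgt_inj h
    · exact fun _ h2 => absurd h h2⟩
  letI : IsIrrefl (St m) (fun q q' => hgt q < hgt q') := ⟨fun a => Nat.lt_irrefl _⟩
  letI : IsTrans (St m) (fun q q' => hgt q < hgt q') := ⟨fun a b c => Nat.lt_trans⟩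
  letI : IsStrictOrder (St m) (fun q q' => hgt q < hgt q') := {}
  exact {}

/-- Positions of profile-graph vertices on the line. -/
def pos : St m × Bool → ℤ :=
  fun p => if p.2 then (hgt p.1 : ℤ) else -(hgt p.1 : ℤ)

lemma extlt_pos {x y : St m × Bool} (h : ExtLt (fun q q' => hgt q < hgt q') x y) :
    pos x < pos y := by
  have h1 := hgt_pos x.1
  have h2 := hgt_pos y.1
  rcases h with ⟨hx, hy⟩ | ⟨hl, hx, hy⟩ | ⟨hl, hx, hy⟩ <;> simp [pos, hx, hy] <;> omega

lemma edge_ports {f : Set (St m × St m)} {u v : St m × Bool}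
    (h : ProfileEdge (M T).ρ f u v ∨ ProfileEdge (M T).ρ f v u) :
    ∃ p ∈ f, (pos u = pos (p.1, !rho p.1) ∧ pos v = pos (p.2, rho p.2)) ∨
      (pos v = pos (p.1, !rho p.1) ∧ pos u = pos (p.2, rho p.2)) := by
  rcases h with ⟨p, hp, hu, hv⟩ | ⟨p, hp, hv, hu⟩
  · exact ⟨p, hp, Or.inl ⟨by rw [hu]; rfl, by rw [hv]; rfl⟩⟩
  · exact ⟨p, hp, Or.inr ⟨by rw [hv]; rfl, by rw [hu]; rfl⟩⟩

lemma M_planar : (M T).Planar := by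
  refine ⟨fun q q' => hgt q < hgt q', slt_STO, ?_⟩
  intro a hex
  obtain ⟨u, x, v, y, h1, h2, h3, he1, he2⟩ := hex
  obtain ⟨p₁, hp₁, hor₁⟩ := edge_ports he1
  obtain ⟨p₂, hp₂, hor₂⟩ := edge_ports he2
  have k1 := extlt_pos h1
  have k2 := extlt_pos h2
  have k3 := extlt_pos h3
  rcases rel_sym_cases (show (p₁.1, p₁.2) ∈ (M T).rel (Tape.sym a) from hp₁) with
    ⟨hq1, hr1⟩ | ⟨r₁, c₁, w₁, t₁, hq1, hr1, hd1⟩ | ⟨r₁, w₁, hq1, hr1, hd1⟩ |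
    ⟨c₁, c₁', r₁, s₁, w₁, t₁, hq1, hr1, hd1⟩ | ⟨c₁, r₁, s₁, w₁, hq1, hr1, hd1⟩ <;>
  rcases rel_sym_cases (show (p₂.1, p₂.2) ∈ (M T).rel (Tape.sym a) from hp₂) with
    ⟨hq2, hr2⟩ | ⟨r₂, c₂, w₂, t₂, hq2, hr2, hd2⟩ | ⟨r₂, w₂, hq2, hr2, hd2⟩ |
    ⟨c₂, c₂', r₂, s₂, w₂, t₂, hq2, hr2, hd2⟩ | ⟨c₂, r₂, s₂, w₂, hq2, hr2, hd2⟩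
  · -- (1,1)
    have hX1 : pos (p₁.1, !rho p₁.1) = -((2*m+4 : ℕ) : ℤ) := by rw [hq1]; rfl
    have hY1 : pos (p₁.2, rho p₁.2) = ((2*m+4 : ℕ) : ℤ) := by rw [hr1]; rfl
    have hX2 : pos (p₂.1, !rho p₂.1) = -((2*m+4 : ℕ) : ℤ) := by rw [hq2]; rfl
    have hY2 : pos (p₂.2, rho p₂.2) = ((2*m+4 : ℕ) : ℤ) := by rw [hr2]; rfl
    rw [hX1, hY1] at hor₁
    rw [hX2, hY2] at hor₂
    rcases hor₁ with ⟨e1, e2⟩ | ⟨e1, e2⟩ <;> rcases hor₂ with ⟨e3, e4⟩ | ⟨e3, e4⟩ <;> omega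
  · -- (1,2)
    have hX1 : pos (p₁.1, !rho p₁.1) = -((2*m+4 : ℕ) : ℤ) := by rw [hq1]; rfl
    have hY1 : pos (p₁.2, rho p₁.2) = ((2*m+4 : ℕ) : ℤ) := by rw [hr1]; rfl
    have hX2 : pos (p₂.1, !rho p₂.1) = ((2*(r₂:ℕ)+1 : ℕ) : ℤ) := by rw [hq2]; rfl
    have hY2 : pos (p₂.2, rho p₂.2) = -((2*(c₂:ℕ)+1 : ℕ) : ℤ) := by rw [hr2]; rfl
    rw [hX1, hY1] at hor₁
    rw [hX2, hY2] at hor₂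
    have hbnd2a := Fin.is_le r₂
    have hbnd2b := Fin.is_le c₂
    rcases hor₁ with ⟨e1, e2⟩ | ⟨e1, e2⟩ <;> rcases hor₂ with ⟨e3, e4⟩ | ⟨e3, e4⟩ <;> omega
  · -- (1,3)
    have hX1 : pos (p₁.1, !rho p₁.1) = -((2*m+4 : ℕ) : ℤ) := by rw [hq1]; rfl
    have hY1 : pos (p₁.2, rho p₁.2) = ((2*m+4 : ℕ) : ℤ) := by rw [hr1]; rfl
    have hX2 : pos (p₂.1, !rho p₂.1) = ((2*(r₂:ℕ)+1 : ℕ) : ℤ) := by rw [hq2]; rfl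
    have hY2 : pos (p₂.2, rho p₂.2) = ((2*(r₂:ℕ)+2 : ℕ) : ℤ) := by rw [hr2]; rfl
    rw [hX1, hY1] at hor₁
    rw [hX2, hY2] at hor₂
    have hbnd2a := Fin.is_le r₂
    rcases hor₁ with ⟨e1, e2⟩ | ⟨e1, e2⟩ <;> rcases hor₂ with ⟨e3, e4⟩ | ⟨e3, e4⟩ <;> omega
  · -- (1,4)
    have hX1 : pos (p₁.1, !rho p₁.1) = -((2*m+4 : ℕ) : ℤ) := by rw [hq1]; rfl
    have hY1 : pos (p₁.2, rho p₁.2) = ((2*m+4 : ℕ) : ℤ) := by rw [hr1]; rfl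
    have hX2 : pos (p₂.1, !rho p₂.1) = -((2*(c₂:ℕ)+2 : ℕ) : ℤ) := by rw [hq2]; rfl
    have hY2 : pos (p₂.2, rho p₂.2) = -((2*(c₂':ℕ)+1 : ℕ) : ℤ) := by rw [hr2]; rfl
    rw [hX1, hY1] at hor₁
    rw [hX2, hY2] at hor₂
    have hbnd2b := Fin.is_le c₂
    have hbnd2bx := Fin.is_le c₂'
    have hcc2 := fact_consec_lt (T.mono a) hd2
    rcases hor₁ with ⟨e1, e2⟩ | ⟨e1, e2⟩ <;> rcases hor₂ with ⟨e3, e4⟩ | ⟨e3, e4⟩ <;> omega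
  · -- (1,5)
    have hX1 : pos (p₁.1, !rho p₁.1) = -((2*m+4 : ℕ) : ℤ) := by rw [hq1]; rfl
    have hY1 : pos (p₁.2, rho p₁.2) = ((2*m+4 : ℕ) : ℤ) := by rw [hr1]; rfl
    have hX2 : pos (p₂.1, !rho p₂.1) = -((2*(c₂:ℕ)+2 : ℕ) : ℤ) := by rw [hq2]; rfl
    have hY2 : pos (p₂.2, rho p₂.2) = ((2*(r₂:ℕ)+2 : ℕ) : ℤ) := by rw [hr2]; rfl
    rw [hX1, hY1] at hor₁
    rw [hX2, hY2] at hor₂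
    have hbnd2b := Fin.is_le c₂
    have hbnd2a := Fin.is_le r₂
    rcases hor₁ with ⟨e1, e2⟩ | ⟨e1, e2⟩ <;> rcases hor₂ with ⟨e3, e4⟩ | ⟨e3, e4⟩ <;> omega
  · -- (2,1)
    have hX1 : pos (p₁.1, !rho p₁.1) = ((2*(r₁:ℕ)+1 : ℕ) : ℤ) := by rw [hq1]; rfl
    have hY1 : pos (p₁.2, rho p₁.2) = -((2*(c₁:ℕ)+1 : ℕ) : ℤ) := by rw [hr1]; rfl
    have hX2 : pos (p₂.1, !rho p₂.1) = -((2*m+4 : ℕ) : ℤ) := by rw [hq2]; rfl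
    have hY2 : pos (p₂.2, rho p₂.2) = ((2*m+4 : ℕ) : ℤ) := by rw [hr2]; rfl
    rw [hX1, hY1] at hor₁
    rw [hX2, hY2] at hor₂
    have hbnd1a := Fin.is_le r₁
    have hbnd1b := Fin.is_le c₁
    rcases hor₁ with ⟨e1, e2⟩ | ⟨e1, e2⟩ <;> rcases hor₂ with ⟨e3, e4⟩ | ⟨e3, e4⟩ <;> omega
  · -- (2,2)
    have hX1 : pos (p₁.1, !rho p₁.1) = ((2*(r₁:ℕ)+1 : ℕ) : ℤ) := by rw [hq1]; rfl
    have hY1 : pos (p₁.2, rho p₁.2) = -((2*(c₁:ℕ)+1 : ℕ) : ℤ) := by rw [hr1]; rfl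
    have hX2 : pos (p₂.1, !rho p₂.1) = ((2*(r₂:ℕ)+1 : ℕ) : ℤ) := by rw [hq2]; rfl
    have hY2 : pos (p₂.2, rho p₂.2) = -((2*(c₂:ℕ)+1 : ℕ) : ℤ) := by rw [hr2]; rfl
    rw [hX1, hY1] at hor₁
    rw [hX2, hY2] at hor₂
    have hbnd1a := Fin.is_le r₁
    have hbnd1b := Fin.is_le c₁
    have hbnd2a := Fin.is_le r₂
    have hbnd2b := Fin.is_le c₂
    rcases Nat.lt_trichotomy (r₁:ℕ) (r₂:ℕ) with htr | htr | htr
    · have hf := cross_mem (T.mono a) htr (show Sum.inl c₁ ∈ T.upd a r₁ by simp [hd1])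
        (show Sum.inl c₂ ∈ T.upd a r₂ by simp [hd2])
      rcases hor₁ with ⟨e1, e2⟩ | ⟨e1, e2⟩ <;> rcases hor₂ with ⟨e3, e4⟩ | ⟨e3, e4⟩ <;> omega
    · obtain rfl : r₁ = r₂ := Fin.ext htr
      obtain ⟨-, rfl, -⟩ := inr_prefix_eq (hd1.symm.trans hd2)
      rcases hor₁ with ⟨e1, e2⟩ | ⟨e1, e2⟩ <;> rcases hor₂ with ⟨e3, e4⟩ | ⟨e3, e4⟩ <;> omega
    · have hf := cross_mem (T.mono a) htr (show Sum.inl c₂ ∈ T.upd a r₂ by simp [hd2])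
        (show Sum.inl c₁ ∈ T.upd a r₁ by simp [hd1])
      rcases hor₁ with ⟨e1, e2⟩ | ⟨e1, e2⟩ <;> rcases hor₂ with ⟨e3, e4⟩ | ⟨e3, e4⟩ <;> omega
  · -- (2,3)
    have hX1 : pos (p₁.1, !rho p₁.1) = ((2*(r₁:ℕ)+1 : ℕ) : ℤ) := by rw [hq1]; rfl
    have hY1 : pos (p₁.2, rho p₁.2) = -((2*(c₁:ℕ)+1 : ℕ) : ℤ) := by rw [hr1]; rfl
    have hX2 : pos (p₂.1, !rho p₂.1) = ((2*(r₂:ℕ)+1 : ℕ) : ℤ) := by rw [hq2]; rfl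
    have hY2 : pos (p₂.2, rho p₂.2) = ((2*(r₂:ℕ)+2 : ℕ) : ℤ) := by rw [hr2]; rfl
    rw [hX1, hY1] at hor₁
    rw [hX2, hY2] at hor₂
    have hbnd1a := Fin.is_le r₁
    have hbnd1b := Fin.is_le c₁
    have hbnd2a := Fin.is_le r₂
    rcases hor₁ with ⟨e1, e2⟩ | ⟨e1, e2⟩ <;> rcases hor₂ with ⟨e3, e4⟩ | ⟨e3, e4⟩ <;> omega
  · -- (2,4)
    have hX1 : pos (p₁.1, !rho p₁.1) = ((2*(r₁:ℕ)+1 : ℕ) : ℤ) := by rw [hq1]; rfl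
    have hY1 : pos (p₁.2, rho p₁.2) = -((2*(c₁:ℕ)+1 : ℕ) : ℤ) := by rw [hr1]; rfl
    have hX2 : pos (p₂.1, !rho p₂.1) = -((2*(c₂:ℕ)+2 : ℕ) : ℤ) := by rw [hq2]; rfl
    have hY2 : pos (p₂.2, rho p₂.2) = -((2*(c₂':ℕ)+1 : ℕ) : ℤ) := by rw [hr2]; rfl
    rw [hX1, hY1] at hor₁
    rw [hX2, hY2] at hor₂
    have hbnd1a := Fin.is_le r₁
    have hbnd1b := Fin.is_le c₁
    have hbnd2b := Fin.is_le c₂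
    have hbnd2bx := Fin.is_le c₂'
    have hcc2 := fact_consec_lt (T.mono a) hd2
    rcases hor₁ with ⟨e1, e2⟩ | ⟨e1, e2⟩ <;> rcases hor₂ with ⟨e3, e4⟩ | ⟨e3, e4⟩ <;> omega
  · -- (2,5)
    have hX1 : pos (p₁.1, !rho p₁.1) = ((2*(r₁:ℕ)+1 : ℕ) : ℤ) := by rw [hq1]; rfl
    have hY1 : pos (p₁.2, rho p₁.2) = -((2*(c₁:ℕ)+1 : ℕ) : ℤ) := by rw [hr1]; rfl
    have hX2 : pos (p₂.1, !rho p₂.1) = -((2*(c₂:ℕ)+2 : ℕ) : ℤ) := by rw [hq2]; rfl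
    have hY2 : pos (p₂.2, rho p₂.2) = ((2*(r₂:ℕ)+2 : ℕ) : ℤ) := by rw [hr2]; rfl
    rw [hX1, hY1] at hor₁
    rw [hX2, hY2] at hor₂
    have hbnd1a := Fin.is_le r₁
    have hbnd1b := Fin.is_le c₁
    have hbnd2b := Fin.is_le c₂
    have hbnd2a := Fin.is_le r₂
    rcases le_or_gt ((r₁:ℕ)) ((r₂:ℕ)) with htr | htr
    · have hf := fact_first_le (T.mono a) hd1 (show Sum.inl c₂ ∈ T.upd a r₂ by simp [hd2]) htr
      rcases hor₁ with ⟨e1, e2⟩ | ⟨e1, e2⟩ <;> rcases hor₂ with ⟨e3, e4⟩ | ⟨e3, e4⟩ <;> omega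
    · rcases hor₁ with ⟨e1, e2⟩ | ⟨e1, e2⟩ <;> rcases hor₂ with ⟨e3, e4⟩ | ⟨e3, e4⟩ <;> omega
  · -- (3,1)
    have hX1 : pos (p₁.1, !rho p₁.1) = ((2*(r₁:ℕ)+1 : ℕ) : ℤ) := by rw [hq1]; rfl
    have hY1 : pos (p₁.2, rho p₁.2) = ((2*(r₁:ℕ)+2 : ℕ) : ℤ) := by rw [hr1]; rfl
    have hX2 : pos (p₂.1, !rho p₂.1) = -((2*m+4 : ℕ) : ℤ) := by rw [hq2]; rfl
    have hY2 : pos (p₂.2, rho p₂.2) = ((2*m+4 : ℕ) : ℤ) := by rw [hr2]; rfl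
    rw [hX1, hY1] at hor₁
    rw [hX2, hY2] at hor₂
    have hbnd1a := Fin.is_le r₁
    rcases hor₁ with ⟨e1, e2⟩ | ⟨e1, e2⟩ <;> rcases hor₂ with ⟨e3, e4⟩ | ⟨e3, e4⟩ <;> omega
  · -- (3,2)
    have hX1 : pos (p₁.1, !rho p₁.1) = ((2*(r₁:ℕ)+1 : ℕ) : ℤ) := by rw [hq1]; rfl
    have hY1 : pos (p₁.2, rho p₁.2) = ((2*(r₁:ℕ)+2 : ℕ) : ℤ) := by rw [hr1]; rfl
    have hX2 : pos (p₂.1, !rho p₂.1) = ((2*(r₂:ℕ)+1 : ℕ) : ℤ) := by rw [hq2]; rfl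
    have hY2 : pos (p₂.2, rho p₂.2) = -((2*(c₂:ℕ)+1 : ℕ) : ℤ) := by rw [hr2]; rfl
    rw [hX1, hY1] at hor₁
    rw [hX2, hY2] at hor₂
    have hbnd1a := Fin.is_le r₁
    have hbnd2a := Fin.is_le r₂
    have hbnd2b := Fin.is_le c₂
    rcases hor₁ with ⟨e1, e2⟩ | ⟨e1, e2⟩ <;> rcases hor₂ with ⟨e3, e4⟩ | ⟨e3, e4⟩ <;> omega
  · -- (3,3)
    have hX1 : pos (p₁.1, !rho p₁.1) = ((2*(r₁:ℕ)+1 : ℕ) : ℤ) := by rw [hq1]; rfl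
    have hY1 : pos (p₁.2, rho p₁.2) = ((2*(r₁:ℕ)+2 : ℕ) : ℤ) := by rw [hr1]; rfl
    have hX2 : pos (p₂.1, !rho p₂.1) = ((2*(r₂:ℕ)+1 : ℕ) : ℤ) := by rw [hq2]; rfl
    have hY2 : pos (p₂.2, rho p₂.2) = ((2*(r₂:ℕ)+2 : ℕ) : ℤ) := by rw [hr2]; rfl
    rw [hX1, hY1] at hor₁
    rw [hX2, hY2] at hor₂
    have hbnd1a := Fin.is_le r₁
    have hbnd2a := Fin.is_le r₂
    rcases hor₁ with ⟨e1, e2⟩ | ⟨e1, e2⟩ <;> rcases hor₂ with ⟨e3, e4⟩ | ⟨e3, e4⟩ <;> omega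
  · -- (3,4)
    have hX1 : pos (p₁.1, !rho p₁.1) = ((2*(r₁:ℕ)+1 : ℕ) : ℤ) := by rw [hq1]; rfl
    have hY1 : pos (p₁.2, rho p₁.2) = ((2*(r₁:ℕ)+2 : ℕ) : ℤ) := by rw [hr1]; rfl
    have hX2 : pos (p₂.1, !rho p₂.1) = -((2*(c₂:ℕ)+2 : ℕ) : ℤ) := by rw [hq2]; rfl
    have hY2 : pos (p₂.2, rho p₂.2) = -((2*(c₂':ℕ)+1 : ℕ) : ℤ) := by rw [hr2]; rfl
    rw [hX1, hY1] at hor₁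
    rw [hX2, hY2] at hor₂
    have hbnd1a := Fin.is_le r₁
    have hbnd2b := Fin.is_le c₂
    have hbnd2bx := Fin.is_le c₂'
    have hcc2 := fact_consec_lt (T.mono a) hd2
    rcases hor₁ with ⟨e1, e2⟩ | ⟨e1, e2⟩ <;> rcases hor₂ with ⟨e3, e4⟩ | ⟨e3, e4⟩ <;> omega
  · -- (3,5)
    have hX1 : pos (p₁.1, !rho p₁.1) = ((2*(r₁:ℕ)+1 : ℕ) : ℤ) := by rw [hq1]; rfl
    have hY1 : pos (p₁.2, rho p₁.2) = ((2*(r₁:ℕ)+2 : ℕ) : ℤ) := by rw [hr1]; rfl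
    have hX2 : pos (p₂.1, !rho p₂.1) = -((2*(c₂:ℕ)+2 : ℕ) : ℤ) := by rw [hq2]; rfl
    have hY2 : pos (p₂.2, rho p₂.2) = ((2*(r₂:ℕ)+2 : ℕ) : ℤ) := by rw [hr2]; rfl
    rw [hX1, hY1] at hor₁
    rw [hX2, hY2] at hor₂
    have hbnd1a := Fin.is_le r₁
    have hbnd2b := Fin.is_le c₂
    have hbnd2a := Fin.is_le r₂
    rcases hor₁ with ⟨e1, e2⟩ | ⟨e1, e2⟩ <;> rcases hor₂ with ⟨e3, e4⟩ | ⟨e3, e4⟩ <;> omega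
  · -- (4,1)
    have hX1 : pos (p₁.1, !rho p₁.1) = -((2*(c₁:ℕ)+2 : ℕ) : ℤ) := by rw [hq1]; rfl
    have hY1 : pos (p₁.2, rho p₁.2) = -((2*(c₁':ℕ)+1 : ℕ) : ℤ) := by rw [hr1]; rfl
    have hX2 : pos (p₂.1, !rho p₂.1) = -((2*m+4 : ℕ) : ℤ) := by rw [hq2]; rfl
    have hY2 : pos (p₂.2, rho p₂.2) = ((2*m+4 : ℕ) : ℤ) := by rw [hr2]; rfl
    rw [hX1, hY1] at hor₁
    rw [hX2, hY2] at hor₂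
    have hbnd1b := Fin.is_le c₁
    have hbnd1bx := Fin.is_le c₁'
    have hcc1 := fact_consec_lt (T.mono a) hd1
    rcases hor₁ with ⟨e1, e2⟩ | ⟨e1, e2⟩ <;> rcases hor₂ with ⟨e3, e4⟩ | ⟨e3, e4⟩ <;> omega
  · -- (4,2)
    have hX1 : pos (p₁.1, !rho p₁.1) = -((2*(c₁:ℕ)+2 : ℕ) : ℤ) := by rw [hq1]; rfl
    have hY1 : pos (p₁.2, rho p₁.2) = -((2*(c₁':ℕ)+1 : ℕ) : ℤ) := by rw [hr1]; rfl
    have hX2 : pos (p₂.1, !rho p₂.1) = ((2*(r₂:ℕ)+1 : ℕ) : ℤ) := by rw [hq2]; rfl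
    have hY2 : pos (p₂.2, rho p₂.2) = -((2*(c₂:ℕ)+1 : ℕ) : ℤ) := by rw [hr2]; rfl
    rw [hX1, hY1] at hor₁
    rw [hX2, hY2] at hor₂
    have hbnd1b := Fin.is_le c₁
    have hbnd1bx := Fin.is_le c₁'
    have hbnd2a := Fin.is_le r₂
    have hbnd2b := Fin.is_le c₂
    have hcc1 := fact_consec_lt (T.mono a) hd1
    have hnb := fact_nobetween (T.mono a) hd1 (show Sum.inl c₂ ∈ T.upd a r₂ by simp [hd2])
    rcases hnb with hnb | hnb <;> rcases hor₁ with ⟨e1, e2⟩ | ⟨e1, e2⟩ <;> rcases hor₂ with ⟨e3, e4⟩ | ⟨e3, e4⟩ <;> omega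
  · -- (4,3)
    have hX1 : pos (p₁.1, !rho p₁.1) = -((2*(c₁:ℕ)+2 : ℕ) : ℤ) := by rw [hq1]; rfl
    have hY1 : pos (p₁.2, rho p₁.2) = -((2*(c₁':ℕ)+1 : ℕ) : ℤ) := by rw [hr1]; rfl
    have hX2 : pos (p₂.1, !rho p₂.1) = ((2*(r₂:ℕ)+1 : ℕ) : ℤ) := by rw [hq2]; rfl
    have hY2 : pos (p₂.2, rho p₂.2) = ((2*(r₂:ℕ)+2 : ℕ) : ℤ) := by rw [hr2]; rfl
    rw [hX1, hY1] at hor₁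
    rw [hX2, hY2] at hor₂
    have hbnd1b := Fin.is_le c₁
    have hbnd1bx := Fin.is_le c₁'
    have hbnd2a := Fin.is_le r₂
    have hcc1 := fact_consec_lt (T.mono a) hd1
    rcases hor₁ with ⟨e1, e2⟩ | ⟨e1, e2⟩ <;> rcases hor₂ with ⟨e3, e4⟩ | ⟨e3, e4⟩ <;> omega
  · -- (4,4)
    have hX1 : pos (p₁.1, !rho p₁.1) = -((2*(c₁:ℕ)+2 : ℕ) : ℤ) := by rw [hq1]; rfl
    have hY1 : pos (p₁.2, rho p₁.2) = -((2*(c₁':ℕ)+1 : ℕ) : ℤ) := by rw [hr1]; rfl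
    have hX2 : pos (p₂.1, !rho p₂.1) = -((2*(c₂:ℕ)+2 : ℕ) : ℤ) := by rw [hq2]; rfl
    have hY2 : pos (p₂.2, rho p₂.2) = -((2*(c₂':ℕ)+1 : ℕ) : ℤ) := by rw [hr2]; rfl
    rw [hX1, hY1] at hor₁
    rw [hX2, hY2] at hor₂
    have hbnd1b := Fin.is_le c₁
    have hbnd1bx := Fin.is_le c₁'
    have hbnd2b := Fin.is_le c₂
    have hbnd2bx := Fin.is_le c₂'
    have hcc1 := fact_consec_lt (T.mono a) hd1
    have hcc2 := fact_consec_lt (T.mono a) hd2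
    have hnb := fact_nobetween (T.mono a) hd1 (show Sum.inl c₂' ∈ T.upd a r₂ by simp [hd2])
    rcases hnb with hnb | hnb <;> rcases hor₁ with ⟨e1, e2⟩ | ⟨e1, e2⟩ <;> rcases hor₂ with ⟨e3, e4⟩ | ⟨e3, e4⟩ <;> omega
  · -- (4,5)
    have hX1 : pos (p₁.1, !rho p₁.1) = -((2*(c₁:ℕ)+2 : ℕ) : ℤ) := by rw [hq1]; rfl
    have hY1 : pos (p₁.2, rho p₁.2) = -((2*(c₁':ℕ)+1 : ℕ) : ℤ) := by rw [hr1]; rfl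
    have hX2 : pos (p₂.1, !rho p₂.1) = -((2*(c₂:ℕ)+2 : ℕ) : ℤ) := by rw [hq2]; rfl
    have hY2 : pos (p₂.2, rho p₂.2) = ((2*(r₂:ℕ)+2 : ℕ) : ℤ) := by rw [hr2]; rfl
    rw [hX1, hY1] at hor₁
    rw [hX2, hY2] at hor₂
    have hbnd1b := Fin.is_le c₁
    have hbnd1bx := Fin.is_le c₁'
    have hbnd2b := Fin.is_le c₂
    have hbnd2a := Fin.is_le r₂
    have hcc1 := fact_consec_lt (T.mono a) hd1
    have hnb := fact_nobetween (T.mono a) hd1 (show Sum.inl c₂ ∈ T.upd a r₂ by simp [hd2])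
    rcases hnb with hnb | hnb <;> rcases hor₁ with ⟨e1, e2⟩ | ⟨e1, e2⟩ <;> rcases hor₂ with ⟨e3, e4⟩ | ⟨e3, e4⟩ <;> omega
  · -- (5,1)
    have hX1 : pos (p₁.1, !rho p₁.1) = -((2*(c₁:ℕ)+2 : ℕ) : ℤ) := by rw [hq1]; rfl
    have hY1 : pos (p₁.2, rho p₁.2) = ((2*(r₁:ℕ)+2 : ℕ) : ℤ) := by rw [hr1]; rfl
    have hX2 : pos (p₂.1, !rho p₂.1) = -((2*m+4 : ℕ) : ℤ) := by rw [hq2]; rfl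
    have hY2 : pos (p₂.2, rho p₂.2) = ((2*m+4 : ℕ) : ℤ) := by rw [hr2]; rfl
    rw [hX1, hY1] at hor₁
    rw [hX2, hY2] at hor₂
    have hbnd1b := Fin.is_le c₁
    have hbnd1a := Fin.is_le r₁
    rcases hor₁ with ⟨e1, e2⟩ | ⟨e1, e2⟩ <;> rcases hor₂ with ⟨e3, e4⟩ | ⟨e3, e4⟩ <;> omega
  · -- (5,2)
    have hX1 : pos (p₁.1, !rho p₁.1) = -((2*(c₁:ℕ)+2 : ℕ) : ℤ) := by rw [hq1]; rfl
    have hY1 : pos (p₁.2, rho p₁.2) = ((2*(r₁:ℕ)+2 : ℕ) : ℤ) := by rw [hr1]; rfl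
    have hX2 : pos (p₂.1, !rho p₂.1) = ((2*(r₂:ℕ)+1 : ℕ) : ℤ) := by rw [hq2]; rfl
    have hY2 : pos (p₂.2, rho p₂.2) = -((2*(c₂:ℕ)+1 : ℕ) : ℤ) := by rw [hr2]; rfl
    rw [hX1, hY1] at hor₁
    rw [hX2, hY2] at hor₂
    have hbnd1b := Fin.is_le c₁
    have hbnd1a := Fin.is_le r₁
    have hbnd2a := Fin.is_le r₂
    have hbnd2b := Fin.is_le c₂
    rcases lt_or_ge ((r₁:ℕ)) ((r₂:ℕ)) with htr | htr
    · have hf := cross_mem (T.mono a) htr (show Sum.inl c₁ ∈ T.upd a r₁ by simp [hd1])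
        (show Sum.inl c₂ ∈ T.upd a r₂ by simp [hd2])
      rcases hor₁ with ⟨e1, e2⟩ | ⟨e1, e2⟩ <;> rcases hor₂ with ⟨e3, e4⟩ | ⟨e3, e4⟩ <;> omega
    · rcases hor₁ with ⟨e1, e2⟩ | ⟨e1, e2⟩ <;> rcases hor₂ with ⟨e3, e4⟩ | ⟨e3, e4⟩ <;> omega
  · -- (5,3)
    have hX1 : pos (p₁.1, !rho p₁.1) = -((2*(c₁:ℕ)+2 : ℕ) : ℤ) := by rw [hq1]; rfl
    have hY1 : pos (p₁.2, rho p₁.2) = ((2*(r₁:ℕ)+2 : ℕ) : ℤ) := by rw [hr1]; rfl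
    have hX2 : pos (p₂.1, !rho p₂.1) = ((2*(r₂:ℕ)+1 : ℕ) : ℤ) := by rw [hq2]; rfl
    have hY2 : pos (p₂.2, rho p₂.2) = ((2*(r₂:ℕ)+2 : ℕ) : ℤ) := by rw [hr2]; rfl
    rw [hX1, hY1] at hor₁
    rw [hX2, hY2] at hor₂
    have hbnd1b := Fin.is_le c₁
    have hbnd1a := Fin.is_le r₁
    have hbnd2a := Fin.is_le r₂
    rcases hor₁ with ⟨e1, e2⟩ | ⟨e1, e2⟩ <;> rcases hor₂ with ⟨e3, e4⟩ | ⟨e3, e4⟩ <;> omega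
  · -- (5,4)
    have hX1 : pos (p₁.1, !rho p₁.1) = -((2*(c₁:ℕ)+2 : ℕ) : ℤ) := by rw [hq1]; rfl
    have hY1 : pos (p₁.2, rho p₁.2) = ((2*(r₁:ℕ)+2 : ℕ) : ℤ) := by rw [hr1]; rfl
    have hX2 : pos (p₂.1, !rho p₂.1) = -((2*(c₂:ℕ)+2 : ℕ) : ℤ) := by rw [hq2]; rfl
    have hY2 : pos (p₂.2, rho p₂.2) = -((2*(c₂':ℕ)+1 : ℕ) : ℤ) := by rw [hr2]; rfl
    rw [hX1, hY1] at hor₁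
    rw [hX2, hY2] at hor₂
    have hbnd1b := Fin.is_le c₁
    have hbnd1a := Fin.is_le r₁
    have hbnd2b := Fin.is_le c₂
    have hbnd2bx := Fin.is_le c₂'
    have hcc2 := fact_consec_lt (T.mono a) hd2
    rcases hor₁ with ⟨e1, e2⟩ | ⟨e1, e2⟩ <;> rcases hor₂ with ⟨e3, e4⟩ | ⟨e3, e4⟩ <;> omega
  · -- (5,5)
    have hX1 : pos (p₁.1, !rho p₁.1) = -((2*(c₁:ℕ)+2 : ℕ) : ℤ) := by rw [hq1]; rfl
    have hY1 : pos (p₁.2, rho p₁.2) = ((2*(r₁:ℕ)+2 : ℕ) : ℤ) := by rw [hr1]; rfl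
    have hX2 : pos (p₂.1, !rho p₂.1) = -((2*(c₂:ℕ)+2 : ℕ) : ℤ) := by rw [hq2]; rfl
    have hY2 : pos (p₂.2, rho p₂.2) = ((2*(r₂:ℕ)+2 : ℕ) : ℤ) := by rw [hr2]; rfl
    rw [hX1, hY1] at hor₁
    rw [hX2, hY2] at hor₂
    have hbnd1b := Fin.is_le c₁
    have hbnd1a := Fin.is_le r₁
    have hbnd2b := Fin.is_le c₂
    have hbnd2a := Fin.is_le r₂
    rcases Nat.lt_trichotomy (r₁:ℕ) (r₂:ℕ) with htr | htr | htr
    · have hf := cross_mem (T.mono a) htr (show Sum.inl c₁ ∈ T.upd a r₁ by simp [hd1])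
        (show Sum.inl c₂ ∈ T.upd a r₂ by simp [hd2])
      rcases hor₁ with ⟨e1, e2⟩ | ⟨e1, e2⟩ <;> rcases hor₂ with ⟨e3, e4⟩ | ⟨e3, e4⟩ <;> omega
    · obtain rfl : r₁ = r₂ := Fin.ext htr
      obtain ⟨-, rfl, -⟩ := last_inl_eq (hd1.symm.trans hd2)
      rcases hor₁ with ⟨e1, e2⟩ | ⟨e1, e2⟩ <;> rcases hor₂ with ⟨e3, e4⟩ | ⟨e3, e4⟩ <;> omega
    · have hf := cross_mem (T.mono a) htr (show Sum.inl c₂ ∈ T.upd a r₂ by simp [hd2])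
        (show Sum.inl c₁ ∈ T.upd a r₁ by simp [hd1])
      rcases hor₁ with ⟨e1, e2⟩ | ⟨e1, e2⟩ <;> rcases hor₂ with ⟨e3, e4⟩ | ⟨e3, e4⟩ <;> omega

end Planarity
section Transport
variable {Q Q' A B : Type}

/-- Relabel the states of a two-way transducer along a bijection. -/
def relabel (e : Q ≃ Q') (Tr : TwoWayTransducer Q A B) : TwoWayTransducer Q' A B where
  ρ := fun q => Tr.ρ (e.symm q)
  init := e Tr.init
  init_fwd := by simp [Tr.init_fwd]
  final := {q | e.symm q ∈ Tr.final}
  δ := fun a => {x | (e.symm x.1, x.2.1, e.symm x.2.2) ∈ Tr.δ a}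

variable (e : Q ≃ Q') (Tr : TwoWayTransducer Q A B)

lemma relabel_det (h : Tr.Deterministic) : (relabel e Tr).Deterministic := by
  intro a q r r' h1 h2
  obtain ⟨w, hw⟩ := h1
  obtain ⟨w', hw'⟩ := h2
  have hh := h a (e.symm q) (e.symm r) (e.symm r') ⟨w, hw⟩ ⟨w', hw'⟩
  exact e.symm.injective hh

lemma relabel_rev (h : Tr.Reversible) : (relabel e Tr).Reversible := by
  intro a
  refine ⟨relabel_det e Tr (fun a => (h a).1) a, ?_⟩
  intro q q' r h1 h2
  obtain ⟨w, hw⟩ := h1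
  obtain ⟨w', hw'⟩ := h2
  have hh := (h a).2 (e.symm q) (e.symm q') (e.symm r) ⟨w, hw⟩ ⟨w', hw'⟩
  exact e.symm.injective hh

lemma extlt_map {lt : Q → Q → Prop} {x y : Q' × Bool}
    (h : ExtLt (fun q q' => lt (e.symm q) (e.symm q')) x y) :
    ExtLt lt (e.symm x.1, x.2) (e.symm y.1, y.2) := by
  rcases h with ⟨a1, a2⟩ | ⟨a1, a2, a3⟩ | ⟨a1, a2, a3⟩
  · exact Or.inl ⟨a1, a2⟩
  · exact Or.inr (Or.inl ⟨a1, a2, a3⟩)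
  · exact Or.inr (Or.inr ⟨a1, a2, a3⟩)

lemma profile_map {a : Tape A} {x y : Q' × Bool}
    (h : ProfileEdge (relabel e Tr).ρ ((relabel e Tr).rel a) x y) :
    ProfileEdge Tr.ρ (Tr.rel a) (e.symm x.1, x.2) (e.symm y.1, y.2) := by
  obtain ⟨p, hp, hx, hy⟩ := h
  refine ⟨(e.symm p.1, e.symm p.2), hp, ?_, ?_⟩
  · rw [hx]; rfl
  · rw [hy]; rfl

lemma relabel_planar (h : Tr.Planar) : (relabel e Tr).Planar := by
  obtain ⟨lt, hsto, hpl⟩ := h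
  haveI := hsto
  refine ⟨fun q q' => lt (e.symm q) (e.symm q'), ?_, ?_⟩
  · letI : IsTrichotomous Q' (fun q q' => lt (e.symm q) (e.symm q')) := ⟨by
      intro a b
      rcases trichotomous_of lt (e.symm a) (e.symm b) with h | h | h
      · exact fun h1 => absurd h h1
      · exact fun _ _ => e.symm.injective h
      · exact fun _ h2 => absurd h h2⟩
    letI : IsIrrefl Q' (fun q q' => lt (e.symm q) (e.symm q')) :=
      ⟨fun a => irrefl_of lt (e.symm a)⟩
    letI : IsTrans Q' (fun q q' => lt (e.symm q) (e.symm q')) :=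
      ⟨fun a b c h1 h2 => trans_of lt h1 h2⟩
    letI : IsStrictOrder Q' (fun q q' => lt (e.symm q) (e.symm q')) := {}
    exact {}
  · intro a hex
    obtain ⟨u, x, v, y, h1, h2, h3, he1, he2⟩ := hex
    refine hpl a ⟨(e.symm u.1, u.2), (e.symm x.1, x.2), (e.symm v.1, v.2), (e.symm y.1, y.2),
      extlt_map e h1, extlt_map e h2, extlt_map e h3, ?_, ?_⟩
    · rcases he1 with h | h
      · exact Or.inl (profile_map e Tr h)
      · exact Or.inr (profile_map e Tr h)
    · rcases he2 with h | h
      · exact Or.inl (profile_map e Tr h)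
      · exact Or.inr (profile_map e Tr h)

lemma step_relabel_to {c w c'} (h : (relabel e Tr).Step c w c') :
    Tr.Step (c.1, e.symm c.2.1, c.2.2) w (c'.1, e.symm c'.2.1, c'.2.2) := by
  obtain ⟨a, u, v, q, r, hδ, hcase⟩ := h
  refine ⟨a, u, v, e.symm q, e.symm r, hδ, ?_⟩
  rcases hcase with ⟨hq, hr, hc, hc1⟩ | ⟨hq, hr, hc, hc1⟩ | ⟨hq, hr, hc, hc1⟩ |
    ⟨hq, hr, hc, hc1⟩
  · exact Or.inl ⟨hq, hr, by rw [hc], by rw [hc1]⟩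
  · exact Or.inr (Or.inl ⟨hq, hr, by rw [hc], by rw [hc1]⟩)
  · exact Or.inr (Or.inr (Or.inl ⟨hq, hr, by rw [hc], by rw [hc1]⟩))
  · exact Or.inr (Or.inr (Or.inr ⟨hq, hr, by rw [hc], by rw [hc1]⟩))

lemma step_relabel_from {d w d'} (h : Tr.Step d w d') :
    (relabel e Tr).Step (d.1, e d.2.1, d.2.2) w (d'.1, e d'.2.1, d'.2.2) := by
  obtain ⟨a, u, v, q, r, hδ, hcase⟩ := h
  refine ⟨a, u, v, e q, e r, ?_, ?_⟩
  · show (e.symm (e q), w, e.symm (e r)) ∈ Tr.δ a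
    simpa using hδ
  · have hq' : (relabel e Tr).ρ (e q) = Tr.ρ q := by simp [relabel]
    have hr' : (relabel e Tr).ρ (e r) = Tr.ρ r := by simp [relabel]
    rcases hcase with ⟨hq, hr, hc, hc1⟩ | ⟨hq, hr, hc, hc1⟩ | ⟨hq, hr, hc, hc1⟩ |
      ⟨hq, hr, hc, hc1⟩
    · exact Or.inl ⟨hq' ▸ hq, hr' ▸ hr, by rw [hc], by rw [hc1]⟩
    · exact Or.inr (Or.inl ⟨hq' ▸ hq, hr' ▸ hr, by rw [hc], by rw [hc1]⟩)
    · exact Or.inr (Or.inr (Or.inl ⟨hq' ▸ hq, hr' ▸ hr, by rw [hc], by rw [hc1]⟩))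
    · exact Or.inr (Or.inr (Or.inr ⟨hq' ▸ hq, hr' ▸ hr, by rw [hc], by rw [hc1]⟩))

lemma run_relabel_to {c w c'} (h : (relabel e Tr).Run c w c') :
    Tr.Run (c.1, e.symm c.2.1, c.2.2) w (c'.1, e.symm c'.2.1, c'.2.2) := by
  induction h with
  | refl => exact TwoWayTransducer.Run.refl _
  | step hr hs ih => exact TwoWayTransducer.Run.step ih (step_relabel_to e Tr hs)

lemma run_relabel_from {d w d'} (h : Tr.Run d w d') :
    (relabel e Tr).Run (d.1, e d.2.1, d.2.2) w (d'.1, e d'.2.1, d'.2.2) := by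
  induction h with
  | refl => exact TwoWayTransducer.Run.refl _
  | step hr hs ih => exact TwoWayTransducer.Run.step ih (step_relabel_from e Tr hs)

lemma relabel_realizes {u : List A} {v : List B} :
    (relabel e Tr).Realizes u v ↔ Tr.Realizes u v := by
  constructor
  · rintro ⟨qf, hqf, hrun⟩
    refine ⟨e.symm qf, hqf, ?_⟩
    have h2 := run_relabel_to e Tr hrun
    simpa [relabel] using h2
  · rintro ⟨qf, hqf, hrun⟩
    refine ⟨e qf, by simpa [relabel] using hqf, ?_⟩
    have h2 := run_relabel_from e Tr hrun
    exact h2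

lemma relabel_computes {f : List A → Option (List B)} (h : Tr.Computes f) :
    (relabel e Tr).Computes f := fun u v =>
  (h u v).trans (relabel_realizes e Tr).symm

end Transport

/-- every total function computed by a monotone register
transducer is computed by some planar reversible deterministic two-way
finite transducer. -/
theorem mrt_to_planar_reversible {m : ℕ} {A B : Type} [Fintype A] [Fintype B]
    (T : MonotoneRegTransducer m A B) :
    ∃ (n : ℕ) (T' : TwoWayTransducer (Fin n) A B),
      T'.Planar ∧ T'.Reversible ∧ T'.Deterministic ∧
      T'.Computes (fun w => some (T.fn w)) := by
  refine ⟨Fintype.card (St m), relabel (Fintype.equivFin (St m)) (M T), ?_, ?_, ?_, ?_⟩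
  · exact relabel_planar _ _ M_planar
  · exact relabel_rev _ _ M_rev
  · exact relabel_det _ _ M_det
  · exact relabel_computes _ _ M_computes
end Planar2DFT
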